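/- arXiv:1511.04291 — 5 statements merged into one kernel-verified Lean document; each statement's English description precedes it below -/
import Mathlib

section
/- Let Γ be a virtually discrete p-toral group with Sylow p-subgroup S, D a normal abelian subgroup of Γ, and Q ≤ S a subgroup containing C_S(D). Then the image of N_Γ(Q) in G = Γ/C_Γ(D) equals N_G(Q̄), where Q̄ is the image of Q in G. -/
open scoped Pointwise

/-- The Prüfer `p`-group, realized as the `p`-power torsion of `ℚ/ℤ`. -/
def Prufer (p : ℕ) : AddSubgroup (AddCircle (1 : ℚ)) where
  carrier := {x | ∃ n : ℕ, (p ^ n : ℕ) • x = 0}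
  zero_mem' := ⟨0, smul_zero _⟩
  add_mem' := by
    rintro a b ⟨m, hm⟩ ⟨n, hn⟩
    refine ⟨m + n, ?_⟩
    have h1 : (p ^ (m + n) : ℕ) • a = 0 := by
      rw [show p ^ (m + n) = p ^ n * p ^ m by ring, mul_smul, hm, smul_zero]
    have h2 : (p ^ (m + n) : ℕ) • b = 0 := by
      rw [show p ^ (m + n) = p ^ m * p ^ n by ring, mul_smul, hn, smul_zero]
    rw [smul_add, h1, h2, add_zero]
  neg_mem' := by
    rintro a ⟨m, hm⟩
    exact ⟨m, by rw [smul_neg, hm, neg_zero]⟩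

/-- `T` is a discrete `p`-torus: isomorphic to a finite direct power of the Prüfer `p`-group. -/
def IsPTorus (p : ℕ) (T : Type*) [Group T] : Prop :=
  ∃ r : ℕ, Nonempty (T ≃* Multiplicative (Fin r → Prufer p))

/-- `G` is a discrete `p`-toral group: it has a normal discrete `p`-torus of `p`-power index. -/
def IsDiscretePToral (p : ℕ) (G : Type*) [Group G] : Prop :=
  ∃ T : Subgroup G, T.Normal ∧ IsPTorus p ↥T ∧ ∃ k : ℕ, Nat.card (G ⧸ T) = p ^ k

/-- `G` is a virtually discrete `p`-toral group: it has a normal discrete `p`-torus of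
finite index. -/
def IsVirtuallyDiscretePToral (p : ℕ) (G : Type*) [Group G] : Prop :=
  ∃ T : Subgroup G, T.Normal ∧ IsPTorus p ↥T ∧ Finite (G ⧸ T)

/-- A subgroup is discrete `p`-toral. -/
def IsDiscretePToralSubgroup (p : ℕ) {G : Type*} [Group G] (H : Subgroup G) : Prop :=
  IsDiscretePToral p ↥H

/-- A Sylow `p`-subgroup of a virtually discrete `p`-toral group:
a maximal discrete `p`-toral subgroup. -/
def IsMaxDiscretePToralSubgroup (p : ℕ) {G : Type*} [Group G] (S : Subgroup G) : Prop :=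
  IsDiscretePToralSubgroup p S ∧
    ∀ P : Subgroup G, IsDiscretePToralSubgroup p P → S ≤ P → P = S

/-- The identity component `Γ₀`: the (unique maximal) discrete `p`-torus subgroup,
realized as the subgroup generated by all discrete `p`-torus subgroups. -/
def identityComponent (p : ℕ) (G : Type*) [Group G] : Subgroup G :=
  ⨆ T ∈ {T : Subgroup G | IsPTorus p ↥T}, T

/-- `Ω_n(D)`: the subgroup of elements of order dividing `p ^ n`. -/
def Omega (p n : ℕ) (D : Type*) [CommGroup D] : Subgroup D where
  carrier := {x | x ^ p ^ n = 1}
  one_mem' := one_pow _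
  mul_mem' := by
    intro a b ha hb
    simp only [Set.mem_setOf_eq] at *
    rw [mul_pow, ha, hb, one_mul]
  inv_mem' := by
    intro a ha
    simp only [Set.mem_setOf_eq] at *
    rw [inv_pow, ha, inv_one]

/-- `D₀` is the maximal divisible subgroup of `D`. -/
def IsMaxDivisible {D : Type*} [CommGroup D] (D₀ : Subgroup D) : Prop :=
  (∀ x ∈ D₀, ∀ n : ℕ, n ≠ 0 → ∃ y ∈ D₀, y ^ n = x) ∧
    ∀ E : Subgroup D, (∀ x ∈ E, ∀ n : ℕ, n ≠ 0 → ∃ y ∈ E, y ^ n = x) → E ≤ D₀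

/-- The subgroup of points of `D` fixed by every element of `A ⊆ G`. -/
def fixedSub (G : Type*) [Group G] (D : Type*) [Group D] [MulDistribMulAction G D]
    (A : Set G) : Subgroup D where
  carrier := {x | ∀ a ∈ A, a • x = x}
  one_mem' := fun a _ => smul_one a
  mul_mem' := by
    intro x y hx hy a ha
    rw [smul_mul', hx a ha, hy a ha]
  inv_mem' := by
    intro x hx a ha
    rw [smul_inv', hx a ha]

/-- The commutator `[W, A]` of a subgroup `W ≤ D` with a set `A ⊆ G` acting on `D`. -/
def actComm (G : Type*) [Group G] {D : Type*} [Group D] [MulDistribMulAction G D]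
    (A : Set G) (W : Subgroup D) : Subgroup D :=
  Subgroup.closure {x | ∃ w ∈ W, ∃ a ∈ A, x = w⁻¹ * a • w}

/-- `R` is a set of representatives for the (left) cosets of `H` inside `K`. -/
def IsRelTransversal {G : Type*} [Group G] (H K : Subgroup G) (R : Finset G) : Prop :=
  (↑R : Set G) ⊆ (K : Set G) ∧ ∀ g ∈ K, ∃! r, r ∈ R ∧ r⁻¹ * g ∈ H

/-- `A` is an offender of `G` on `D` (relative to the identity component `D₀`). -/
def IsOffender (p : ℕ) {G D : Type*} [Group G] [CommGroup D] [MulDistribMulAction G D]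
    (D₀ : Subgroup D) (A : Subgroup G) : Prop :=
  IsPGroup p ↥A ∧ (∀ x ∈ A, ∀ y ∈ A, x * y = y * x) ∧
    D₀ ≤ fixedSub G D (A : Set G) ∧
    (fixedSub G D (A : Set G)).index ≠ 0 ∧
    (fixedSub G D (A : Set G)).index ≤ Nat.card A

/-- `A` is a best offender of `G` on `D` (relative to the identity component `D₀`). -/
def IsBestOffender (p : ℕ) {G D : Type*} [Group G] [CommGroup D] [MulDistribMulAction G D]
    (D₀ : Subgroup D) (A : Subgroup G) : Prop :=
  IsPGroup p ↥A ∧ (∀ x ∈ A, ∀ y ∈ A, x * y = y * x) ∧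
    D₀ ≤ fixedSub G D (A : Set G) ∧
    ∀ B : Subgroup G, B ≤ A →
      Nat.card B * D₀.relIndex (fixedSub G D (B : Set G)) ≤
        Nat.card A * D₀.relIndex (fixedSub G D (A : Set G))

/-- `A` is an over-offender of `G` on `D`. -/
def IsOverOffender (p : ℕ) {G D : Type*} [Group G] [CommGroup D] [MulDistribMulAction G D]
    (D₀ : Subgroup D) (A : Subgroup G) : Prop :=
  IsBestOffender p D₀ A ∧
    D₀.index < Nat.card A * D₀.relIndex (fixedSub G D (A : Set G))

/-- `A` is a best offender of `G` on the invariant subgroup `W ≤ D` with identity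
component `W₀`. -/
def IsBestOffenderOn (p : ℕ) {G D : Type*} [Group G] [CommGroup D] [MulDistribMulAction G D]
    (W₀ W : Subgroup D) (A : Subgroup G) : Prop :=
  IsPGroup p ↥A ∧ (∀ x ∈ A, ∀ y ∈ A, x * y = y * x) ∧
    W₀ ≤ W ⊓ fixedSub G D (A : Set G) ∧
    ∀ B : Subgroup G, B ≤ A →
      Nat.card B * W₀.relIndex (W ⊓ fixedSub G D (B : Set G)) ≤
        Nat.card A * W₀.relIndex (W ⊓ fixedSub G D (A : Set G))

/-- `A` is an over-offender of `G` on the invariant subgroup `W ≤ D` with identity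
component `W₀`. -/
def IsOverOffenderOn (p : ℕ) {G D : Type*} [Group G] [CommGroup D] [MulDistribMulAction G D]
    (W₀ W : Subgroup D) (A : Subgroup G) : Prop :=
  IsBestOffenderOn p W₀ W A ∧
    W₀.relIndex W < Nat.card A * W₀.relIndex (W ⊓ fixedSub G D (A : Set G))

/-! ### Auxiliary lemmas -/

section Aux

variable {p : ℕ}

/-- Every element of a discrete `p`-torus has `p`-power order. -/
lemma IsPTorus.isPGroup {T : Type*} [Group T] (h : IsPTorus p T) : IsPGroup p T := by
  obtain ⟨r, ⟨e⟩⟩ := h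
  intro t
  set y : Fin r → ↥(Prufer p) := (e t).toAdd with hy
  have h1 : ∀ i : Fin r, ∃ m : ℕ, (p ^ m : ℕ) • ((y i : AddCircle (1 : ℚ))) = 0 :=
    fun i => (y i).2
  choose f hf using h1
  set N := Finset.univ.sup f with hN
  refine ⟨N, e.injective ?_⟩
  rw [map_pow, map_one]
  have : ((e t) ^ p ^ N).toAdd = (p ^ N) • (e t).toAdd := by
    simp [toAdd_pow]
  apply Multiplicative.toAdd.injective
  rw [this, toAdd_one]
  funext i
  rw [Pi.smul_apply, Pi.zero_apply]
  have hfi : f i ≤ N := Finset.le_sup (Finset.mem_univ i)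
  have key : (p ^ N : ℕ) • ((y i : AddCircle (1 : ℚ))) = 0 := by
    have : (p : ℕ) ^ N = p ^ (N - f i) * p ^ (f i) := by
      rw [← pow_add, Nat.sub_add_cancel hfi]
    rw [this, mul_smul, hf i, smul_zero]
  apply Subtype.ext
  simpa using key

/-- Every element of a discrete `p`-toral group has `p`-power order. -/
lemma IsDiscretePToral.isPGroup {G : Type*} [Group G] (hp : p.Prime)
    (h : IsDiscretePToral p G) : IsPGroup p G := by
  obtain ⟨T, hTn, hTt, k, hcard⟩ := h
  intro g
  have hfin : Finite (G ⧸ T) := by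
    have : Nat.card (G ⧸ T) ≠ 0 := by
      rw [hcard]; exact pow_ne_zero _ hp.pos.ne'
    exact Nat.finite_of_card_ne_zero this
  have h1 : ((g : G ⧸ T)) ^ p ^ k = 1 := by
    have := pow_card_eq_one' (G := G ⧸ T) (x := (g : G ⧸ T))
    rw [hcard] at this; exact this
  have h2 : g ^ p ^ k ∈ T := by
    rw [← QuotientGroup.eq_one_iff, QuotientGroup.mk_pow]; exact h1
  obtain ⟨m, hm⟩ := hTt.isPGroup ⟨g ^ p ^ k, h2⟩
  refine ⟨k + m, ?_⟩
  have : (g ^ p ^ k) ^ p ^ m = 1 := by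
    have := congrArg (Subgroup.subtype T) hm
    simpa using this
  rw [pow_add, pow_mul]
  exact this

/-- Conjugate of a subgroup: `cj x A = x A x⁻¹`. -/
def cj {G : Type*} [Group G] (x : G) (A : Subgroup G) : Subgroup G :=
  A.map (MulAut.conj x).toMonoidHom

lemma mem_cj {G : Type*} [Group G] {x y : G} {A : Subgroup G} :
    y ∈ cj x A ↔ x⁻¹ * y * x ∈ A := by
  constructor
  · rintro ⟨a, ha, rfl⟩
    simp only [MulEquiv.coe_toMonoidHom, MulAut.conj_apply]
    have e : x⁻¹ * (x * a * x⁻¹) * x = a := by group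
    rw [e]; exact ha
  · intro h
    refine ⟨x⁻¹ * y * x, h, ?_⟩
    simp only [MulEquiv.coe_toMonoidHom, MulAut.conj_apply]
    group

lemma cj_cj {G : Type*} [Group G] (x y : G) (A : Subgroup G) :
    cj x (cj y A) = cj (x * y) A := by
  ext z
  rw [mem_cj, mem_cj, mem_cj]
  constructor <;> intro h
  · have e : (x * y)⁻¹ * z * (x * y) = y⁻¹ * (x⁻¹ * z * x) * y := by group
    rw [e]; exact h
  · have e : y⁻¹ * (x⁻¹ * z * x) * y = (x * y)⁻¹ * z * (x * y) := by group
    rw [e]; exact h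

lemma cj_one {G : Type*} [Group G] (A : Subgroup G) : cj 1 A = A := by
  ext z; simp [mem_cj]

lemma cj_mono {G : Type*} [Group G] (x : G) {A B : Subgroup G} (h : A ≤ B) :
    cj x A ≤ cj x B :=
  Subgroup.map_mono h

lemma cj_sup {G : Type*} [Group G] (x : G) (A B : Subgroup G) :
    cj x (A ⊔ B) = cj x A ⊔ cj x B :=
  Subgroup.map_sup _ _ _

lemma cj_self {G : Type*} [Group G] {x : G} {A : Subgroup G} (hx : x ∈ A) :
    cj x A = A := by
  ext z
  rw [mem_cj]
  constructor
  · intro h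
    have h2 := A.mul_mem (A.mul_mem hx h) (A.inv_mem hx)
    have e : x * (x⁻¹ * z * x) * x⁻¹ = z := by group
    rwa [e] at h2
  · intro h
    exact A.mul_mem (A.mul_mem (A.inv_mem hx) h) hx

lemma cj_normal {G : Type*} [Group G] (x : G) {A : Subgroup G} (hA : A.Normal) :
    cj x A = A := by
  ext z
  rw [mem_cj]
  constructor
  · intro h
    have := hA.conj_mem _ h x
    simpa [mul_assoc] using this
  · intro h
    have := hA.conj_mem _ h x⁻¹
    simpa [mul_assoc] using this

lemma cj_map {G G' : Type*} [Group G] [Group G'] (f : G →* G') (x : G) (A : Subgroup G) :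
    (cj x A).map f = cj (f x) (A.map f) := by
  ext z
  rw [Subgroup.mem_map, mem_cj]
  constructor
  · rintro ⟨y, hy, rfl⟩
    rw [mem_cj] at hy
    have e : (f x)⁻¹ * f y * f x = f (x⁻¹ * y * x) := by
      rw [map_mul, map_mul, map_inv]
    rw [e]
    exact Subgroup.mem_map_of_mem f hy
  · intro h
    obtain ⟨a, ha, hfa⟩ := h
    refine ⟨x * a * x⁻¹, mem_cj.mpr ?_, ?_⟩
    · have e : x⁻¹ * (x * a * x⁻¹) * x = a := by group
      rw [e]; exact ha
    · rw [map_mul, map_mul, map_inv, hfa]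
      group

lemma mem_normalizer_of_cj {G : Type*} [Group G] {x : G} {A : Subgroup G}
    (h : cj x A = A) : x ∈ Subgroup.normalizer (A : Set G) := by
  rw [Subgroup.mem_normalizer_iff]
  intro y
  constructor
  · intro hy
    have : x * y * x⁻¹ ∈ cj x A := mem_cj.mpr (by simpa [mul_assoc] using hy)
    rwa [h] at this
  · intro hy
    rw [← h] at hy
    rw [mem_cj] at hy
    simpa [mul_assoc] using hy

lemma cj_smul {G : Type*} [Group G] (x : G) (A : Subgroup G) :
    MulAut.conj x • A = cj x A := rfl

lemma isPGroup_elem {G : Type*} [Group G] {A : Subgroup G} (h : IsPGroup p ↥A) :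
    ∀ x ∈ A, ∃ n : ℕ, x ^ p ^ n = (1 : G) := by
  intro x hx
  obtain ⟨n, hn⟩ := h ⟨x, hx⟩
  exact ⟨n, by simpa using congrArg Subtype.val hn⟩

lemma isPGroup_of_elem {G : Type*} [Group G] {A : Subgroup G}
    (h : ∀ x ∈ A, ∃ n : ℕ, x ^ p ^ n = (1 : G)) : IsPGroup p ↥A := by
  intro x
  obtain ⟨n, hn⟩ := h x.1 x.2
  exact ⟨n, Subtype.ext (by simpa using hn)⟩

lemma isPGroup_subgroupOf {G : Type*} [Group G] {A K : Subgroup G}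
    (h : IsPGroup p ↥A) : IsPGroup p ↥(A.subgroupOf K) := by
  apply isPGroup_of_elem
  intro x hx
  rw [Subgroup.mem_subgroupOf] at hx
  obtain ⟨n, hn⟩ := isPGroup_elem h _ hx
  exact ⟨n, Subtype.ext (by simpa using hn)⟩

/-- If `T ≤ P` with `T` a normal `p`-torus of finite index in `Γ` and the image of `P`
in `Γ ⧸ T` is a `p`-group, then `P` is discrete `p`-toral. -/
lemma isDiscretePToral_of_image_pgroup {Γ : Type*} [Group Γ] (hp : p.Prime)
    (T : Subgroup Γ) (hTn : T.Normal) (hTt : IsPTorus p ↥T)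
    (hfin : Finite (Γ ⧸ T)) (P : Subgroup Γ) (hTP : T ≤ P)
    (hPp : IsPGroup p ↥(P.map (QuotientGroup.mk' T))) :
    IsDiscretePToral p ↥P := by
  haveI : Fact p.Prime := ⟨hp⟩
  obtain ⟨r, ⟨e⟩⟩ := hTt
  refine ⟨T.subgroupOf P, hTn.subgroupOf P, ⟨r, ⟨(Subgroup.subgroupOfEquivOfLe hTP).trans e⟩⟩, ?_⟩
  set f := (QuotientGroup.mk' T).comp P.subtype with hfdef
  have hker : f.ker = T.subgroupOf P := by
    ext x
    simp [hfdef, MonoidHom.mem_ker, QuotientGroup.eq_one_iff, Subgroup.mem_subgroupOf]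
  have hrange : f.range = P.map (QuotientGroup.mk' T) := by
    rw [hfdef, MonoidHom.range_comp, Subgroup.range_subtype]
  obtain ⟨k, hk⟩ := IsPGroup.iff_card.mp hPp
  refine ⟨k, ?_⟩
  rw [← hker]
  have hcc : Nat.card (↥P ⧸ f.ker) = Nat.card f.range :=
    Nat.card_congr (QuotientGroup.quotientKerEquivRange f).toEquiv
  rw [hcc, hrange]
  exact hk

/-- The normal torus of finite index is contained in every maximal discrete `p`-toral
subgroup. -/
lemma torus_le_max {Γ : Type*} [Group Γ] (hp : p.Prime)
    (T : Subgroup Γ) (hTn : T.Normal) (hTt : IsPTorus p ↥T) (hfin : Finite (Γ ⧸ T))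
    (S : Subgroup Γ) (hS : IsMaxDiscretePToralSubgroup p S) : T ≤ S := by
  have hSp : IsPGroup p ↥S := IsDiscretePToral.isPGroup hp hS.1
  have hmap : (S ⊔ T).map (QuotientGroup.mk' T) = S.map (QuotientGroup.mk' T) := by
    rw [Subgroup.map_sup, QuotientGroup.map_mk'_self, sup_bot_eq]
  have hPp : IsPGroup p ↥((S ⊔ T).map (QuotientGroup.mk' T)) := by
    rw [hmap]; exact hSp.map _
  have hdt : IsDiscretePToral p ↥(S ⊔ T) :=
    isDiscretePToral_of_image_pgroup hp T hTn hTt hfin (S ⊔ T) le_sup_right hPp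
  have := hS.2 (S ⊔ T) hdt le_sup_left
  rw [← this]
  exact le_sup_right

/-- The image of a maximal discrete `p`-toral subgroup in `Γ ⧸ T` is a maximal
`p`-subgroup. -/
lemma image_max_of_pgroup {Γ : Type*} [Group Γ] (hp : p.Prime)
    (T : Subgroup Γ) (hTn : T.Normal) (hTt : IsPTorus p ↥T) (hfin : Finite (Γ ⧸ T))
    (S : Subgroup Γ) (hS : IsMaxDiscretePToralSubgroup p S) (hTS : T ≤ S)
    (P' : Subgroup (Γ ⧸ T)) (hP' : IsPGroup p ↥P')
    (hSP' : S.map (QuotientGroup.mk' T) ≤ P') :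
    P' = S.map (QuotientGroup.mk' T) := by
  set π := QuotientGroup.mk' T with hπ
  set P := P'.comap π with hP
  have hsurj : Function.Surjective π := QuotientGroup.mk'_surjective T
  have hmapP : P.map π = P' := Subgroup.map_comap_eq_self_of_surjective hsurj P'
  have hTP : T ≤ P := by
    intro t ht
    have : π t = 1 := by
      rw [hπ]
      rwa [QuotientGroup.mk'_apply, QuotientGroup.eq_one_iff]
    simp only [hP, Subgroup.mem_comap, this]
    exact P'.one_mem
  have hSP : S ≤ P := fun s hs => hSP' (Subgroup.mem_map_of_mem π hs)
  have hdt : IsDiscretePToral p ↥P :=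
    isDiscretePToral_of_image_pgroup hp T hTn hTt hfin P hTP (by rw [hmapP]; exact hP')
  have hPS : P = S := hS.2 P hdt hSP
  rw [← hmapP, hPS]

/-- A `p`-subgroup of a finite group whose index is prime to `p` equals any Sylow
subgroup containing it. -/
lemma eq_sylow_of_not_dvd_index {G : Type*} [Group G] [Finite G] (hp : p.Prime)
    (A : Subgroup G) (hA : IsPGroup p ↥A) (hidx : ¬ p ∣ A.index)
    (P : Sylow p G) (hle : A ≤ ↑P) : A = ↑P := by
  haveI : Fact p.Prime := ⟨hp⟩
  have h1 : A.relIndex ↑P * (P : Subgroup G).index = A.index :=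
    Subgroup.relIndex_mul_index hle
  have h2 : ¬ p ∣ A.relIndex ↑P := fun hd => hidx (h1 ▸ hd.mul_right _)
  obtain ⟨n, hn⟩ := IsPGroup.iff_card.mp P.2
  have h3 : A.relIndex ↑P ∣ p ^ n := by
    rw [← hn]
    exact Subgroup.index_dvd_card (A.subgroupOf ↑P)
  obtain ⟨m, hmn, hem⟩ := (Nat.dvd_prime_pow hp).mp h3
  match m, hem with
  | 0, hem =>
    have : (↑P : Subgroup G) ≤ A := Subgroup.relIndex_eq_one.mp (by rw [hem]; rfl)
    exact le_antisymm hle this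
  | (m + 1), hem =>
    exact absurd (hem ▸ dvd_pow_self p (Nat.succ_ne_zero m)) h2

lemma cj_eq_of_mem_normalizer {G : Type*} [Group G] {x : G} {A : Subgroup G}
    (h : x ∈ Subgroup.normalizer (A : Set G)) : cj x A = A := by
  rw [Subgroup.mem_normalizer_iff] at h
  ext z
  rw [mem_cj]
  have h2 := h (x⁻¹ * z * x)
  have e : x * (x⁻¹ * z * x) * x⁻¹ = z := by group
  rw [e] at h2
  exact h2

lemma relindex_mul_card {G : Type*} [Group G] {A K : Subgroup G} (h : A ≤ K) :
    A.relIndex K * Nat.card ↥A = Nat.card ↥K := by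
  have h2 : Nat.card ↥(A.subgroupOf K) = Nat.card ↥A :=
    Nat.card_congr (Subgroup.subgroupOfEquivOfLe h).toEquiv
  calc A.relIndex K * Nat.card ↥A
      = Nat.card ↥(A.subgroupOf K) * (A.subgroupOf K).index := by
        rw [h2, mul_comm]; rfl
    _ = Nat.card ↥K := Subgroup.card_mul_index _

/-- In a finite group, `[H ⊔ N : H] = [N : H ⊓ N]` for `N` normal. -/
lemma relindex_sup_of_normal {G : Type*} [Group G] [Finite G] (H N : Subgroup G)
    [hN : N.Normal] : H.relIndex (H ⊔ N) = (H ⊓ N).relIndex N := by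
  have e : N.relIndex H = N.relIndex (H ⊔ N) :=
    Nat.card_congr (QuotientGroup.quotientInfEquivProdNormalQuotient H N).toEquiv
  have h4 : (H ⊓ N).relIndex H = N.relIndex H := Subgroup.inf_relIndex_left H N
  have h2 : (H ⊓ N).relIndex H * H.relIndex (H ⊔ N) = (H ⊓ N).relIndex (H ⊔ N) :=
    Subgroup.relIndex_mul_relIndex _ _ _ inf_le_left le_sup_left
  have h3 : (H ⊓ N).relIndex N * N.relIndex (H ⊔ N) = (H ⊓ N).relIndex (H ⊔ N) :=
    Subgroup.relIndex_mul_relIndex _ _ _ inf_le_right le_sup_right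
  have hne : N.relIndex (H ⊔ N) ≠ 0 := by
    haveI : Finite (↥(H ⊔ N) ⧸ N.subgroupOf (H ⊔ N)) := Quotient.finite _
    exact Subgroup.index_ne_zero_of_finite
  rw [h4, e] at h2
  have h5 : N.relIndex (H ⊔ N) * H.relIndex (H ⊔ N) =
      N.relIndex (H ⊔ N) * (H ⊓ N).relIndex N := by
    rw [h2, ← h3, mul_comm]
  exact Nat.eq_of_mul_eq_mul_left (Nat.pos_of_ne_zero hne) h5

/-- Dedekind modular law for subgroups (case of a normal subgroup). -/
lemma sup_inf_of_normal {G : Type*} [Group G] (H T K : Subgroup G) [T.Normal]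
    (hHK : H ≤ K) : (H ⊔ T) ⊓ K = H ⊔ (T ⊓ K) := by
  apply le_antisymm
  · rintro x ⟨hx1, hx2⟩
    have hxm : (x : G) ∈ (H : Set G) * (T : Set G) := by
      rw [← Subgroup.mul_normal H T]
      exact hx1
    obtain ⟨h, hh, t, ht, rfl⟩ := hxm
    have htK : t ∈ K := by
      have e : t = h⁻¹ * (h * t) := by group
      rw [e]
      exact K.mul_mem (K.inv_mem (hHK hh)) hx2
    exact Subgroup.mul_mem _ (Subgroup.mem_sup_left hh) (Subgroup.mem_sup_right ⟨ht, htK⟩)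
  · exact le_inf (sup_le le_sup_left (le_trans inf_le_left le_sup_right))
      (sup_le hHK inf_le_right)

end Aux

/-- Let `Γ` be virtually discrete `p`-toral with Sylow `p`-subgroup
`S`, `D ⊴ Γ` abelian (discrete `p`-toral), and `Q ≤ S` containing `C_S(D)`.  Then the
image of `N_Γ(Q)` in `G = Γ/C_Γ(D)` is `N_G(Q̄)`. -/
theorem image_normalizer_eq_normalizer_image (p : ℕ) (hp : p.Prime) {Γ : Type*} [Group Γ]
    (hΓ : IsVirtuallyDiscretePToral p Γ)
    (S : Subgroup Γ) (hS : IsMaxDiscretePToralSubgroup p S)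
    (D : Subgroup Γ) (hN : D.Normal)
    (hab : ∀ x ∈ D, ∀ y ∈ D, x * y = y * x) (hD : IsDiscretePToral p ↥D)
    [hc : (Subgroup.centralizer (D : Set Γ)).Normal]
    (Q : Subgroup Γ) (hQS : Q ≤ S)
    (hCS : S ⊓ Subgroup.centralizer (D : Set Γ) ≤ Q) :
    (Subgroup.normalizer (Q : Set Γ)).map (QuotientGroup.mk' (Subgroup.centralizer (D : Set Γ))) =
      Subgroup.normalizer ((Q.map (QuotientGroup.mk' (Subgroup.centralizer (D : Set Γ))) : Subgroup _) : Set _) := by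
  haveI : Fact p.Prime := ⟨hp⟩
  set C := Subgroup.centralizer (D : Set Γ) with hCdef
  set π' := QuotientGroup.mk' C with hπ'
  have hπ'ker : ∀ z : Γ, π' z = 1 ↔ z ∈ C := by
    intro z
    rw [hπ', QuotientGroup.mk'_apply, QuotientGroup.eq_one_iff]
  apply le_antisymm
  · -- easy inclusion
    rintro x hx
    rw [Subgroup.mem_map] at hx
    obtain ⟨y, hy, rfl⟩ := hx
    apply mem_normalizer_of_cj
    rw [← cj_map, cj_eq_of_mem_normalizer hy]
  · -- hard inclusion
    intro x hx
    obtain ⟨g, rfl⟩ := QuotientGroup.mk'_surjective C x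
    obtain ⟨T, hTn, hTt, hTf⟩ := hΓ
    haveI := hTn
    haveI : Finite (Γ ⧸ T) := hTf
    set π := QuotientGroup.mk' T with hπ
    have hπker : ∀ z : Γ, π z = 1 ↔ z ∈ T := by
      intro z
      rw [hπ, QuotientGroup.mk'_apply, QuotientGroup.eq_one_iff]
    have hTS : T ≤ S := torus_le_max hp T hTn hTt hTf S hS
    have hSpG : IsPGroup p ↥S := IsDiscretePToral.isPGroup hp hS.1
    have hQpG : IsPGroup p ↥Q :=
      isPGroup_of_elem (fun z hz => isPGroup_elem hSpG z (hQS hz))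
    set K := Q ⊔ C with hK
    have hQK : Q ≤ K := le_sup_left
    have hCK : C ≤ K := le_sup_right
    -- `g` normalizes `K`
    have key : ∀ w : Γ, π' w ∈ Subgroup.normalizer ((Q.map π' : Subgroup _) : Set _) → cj w Q ≤ K := by
      intro w hw
      intro z hz
      rw [mem_cj] at hz
      have h1 : π' z ∈ cj (π' w) (Q.map π') := by
        rw [mem_cj]
        have e : (π' w)⁻¹ * π' z * π' w = π' (w⁻¹ * z * w) := by
          rw [map_mul, map_mul, map_inv]
        rw [e]
        exact Subgroup.mem_map_of_mem π' hz
      rw [cj_eq_of_mem_normalizer hw] at h1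
      obtain ⟨q, hq, hqe⟩ := h1
      have hc : q⁻¹ * z ∈ C := by
        rw [← hπ'ker, map_mul, map_inv, hqe]
        group
      have e2 : z = q * (q⁻¹ * z) := by group
      rw [e2]
      exact K.mul_mem (hQK hq) (hCK hc)
    have h1 : cj g Q ≤ K := key g hx
    have h2 : cj g⁻¹ Q ≤ K := by
      refine key g⁻¹ ?_
      rw [map_inv]
      exact (Subgroup.normalizer ((Q.map π' : Subgroup (Γ ⧸ C)) : Set (Γ ⧸ C))).inv_mem hx
    have hgK : cj g K = K := by
      apply le_antisymm
      · rw [hK, cj_sup]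
        exact sup_le h1 (by rw [cj_normal g hc]; exact hCK)
      · have h3 : cj g⁻¹ K ≤ K := by
          rw [hK, cj_sup]
          exact sup_le h2 (by rw [cj_normal g⁻¹ hc]; exact hCK)
        have h4 := cj_mono g h3
        rwa [cj_cj, mul_inv_cancel, cj_one] at h4
    have hg'K : cj g⁻¹ K = K := by
      have h5 := congrArg (cj g⁻¹) hgK
      rw [cj_cj, inv_mul_cancel, cj_one] at h5
      exact h5.symm
    -- K ⊓ S = Q
    have hKS : K ⊓ S = Q := by
      apply le_antisymm
      · rintro z ⟨hzK, hzS⟩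
        have hzm : (z : Γ) ∈ (Q : Set Γ) * (C : Set Γ) := by
          rw [← Subgroup.mul_normal Q C]
          exact hzK
        obtain ⟨q, hq, c, hcm, rfl⟩ := hzm
        have hcs : c ∈ S := by
          have e : c = q⁻¹ * (q * c) := by group
          rw [e]
          exact S.mul_mem (S.inv_mem (hQS hq)) hzS
        exact Q.mul_mem hq (hCS ⟨hcs, hcm⟩)
      · exact le_inf hQK hQS
    set M := K ⊓ T with hM
    have hMQ : M ≤ Q := by
      rw [← hKS]
      exact le_inf inf_le_left (le_trans inf_le_right hTS)
    have cjM : ∀ w : Γ, cj w K = K → cj w M = M := by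
      intro w hw
      ext z
      rw [mem_cj]
      have e1 : w⁻¹ * z * w ∈ K ↔ z ∈ K := by
        constructor
        · intro h; have h6 := mem_cj.mpr h; rwa [hw] at h6
        · intro h; exact mem_cj.mp (by rw [hw]; exact h)
      have e2 : w⁻¹ * z * w ∈ T ↔ z ∈ T := by
        constructor
        · intro h; have h6 := mem_cj.mpr h; rwa [cj_normal w hTn] at h6
        · intro h; exact mem_cj.mp (by rw [cj_normal w hTn]; exact h)
      simp only [hM, Subgroup.mem_inf]
      exact and_congr e1 e2
    have hgM : cj g⁻¹ M = M := cjM g⁻¹ hg'K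
    -- images in Γ ⧸ T
    set Sh := S.map π with hSh
    set Qh := Q.map π with hQh
    set Ch := C.map π with hCh
    set Kh := K.map π with hKh
    have hKhQ : Kh = Qh ⊔ Ch := by rw [hKh, hK, Subgroup.map_sup]
    haveI : Ch.Normal := hc.map π (QuotientGroup.mk'_surjective T)
    have hQhK : Qh ≤ Kh := Subgroup.map_mono hQK
    have hChK : Ch ≤ Kh := Subgroup.map_mono hCK
    have hQhp : IsPGroup p ↥Qh := hQpG.map π
    have hShp : IsPGroup p ↥Sh := hSpG.map π
    -- Sh is a Sylow subgroup of Γ ⧸ T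
    obtain ⟨PS, hPS⟩ := hShp.exists_le_sylow
    have hPSe : (PS : Subgroup (Γ ⧸ T)) = Sh :=
      image_max_of_pgroup hp T hTn hTt hTf S hS hTS PS PS.2 hPS
    have hndvdS : ¬ p ∣ Sh.index := by
      rw [← hPSe]
      exact PS.not_dvd_index
    -- Qh ⊓ Ch = Sh ⊓ Ch
    have hQCSC : Qh ⊓ Ch = Sh ⊓ Ch := by
      apply le_antisymm
      · exact inf_le_inf_right Ch (Subgroup.map_mono hQS)
      · rintro z ⟨hzS, hzC⟩
        obtain ⟨s, hs, rfl⟩ := hzS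
        obtain ⟨c, hcm, hce⟩ := hzC
        have hT : c⁻¹ * s ∈ T := by
          rw [← hπker, map_mul, map_inv, hce]
          group
        have hcS : c ∈ S := by
          have e : c = s * (c⁻¹ * s)⁻¹ := by group
          rw [e]
          exact S.mul_mem hs (S.inv_mem (hTS hT))
        constructor
        · rw [← hce]
          exact Subgroup.mem_map_of_mem π (hCS ⟨hcS, hcm⟩)
        · exact ⟨c, hcm, hce⟩
    -- index of Qh in Kh is prime to p
    have hrel1 : Qh.relIndex Kh = (Qh ⊓ Ch).relIndex Ch := by
      rw [hKhQ]
      exact relindex_sup_of_normal Qh Ch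
    have hrel2 : Sh.relIndex (Sh ⊔ Ch) = (Sh ⊓ Ch).relIndex Ch :=
      relindex_sup_of_normal Sh Ch
    have hdvd : Sh.relIndex (Sh ⊔ Ch) ∣ Sh.index :=
      ⟨(Sh ⊔ Ch).index, (Subgroup.relIndex_mul_index le_sup_left).symm⟩
    have hndvdQ : ¬ p ∣ Qh.relIndex Kh := by
      rw [hrel1, hQCSC, ← hrel2]
      exact fun hd => hndvdS (hd.trans hdvd)
    -- the conjugate subgroup H' and its image
    set H' := cj g⁻¹ Q with hH'
    have hH'K : H' ≤ K := hg'K ▸ cj_mono g⁻¹ hQK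
    have hMH' : M ≤ H' := by
      rw [← hgM]
      exact cj_mono g⁻¹ hMQ
    set Hh := H'.map π with hHh
    have hHhK : Hh ≤ Kh := Subgroup.map_mono hH'K
    have hH'p : IsPGroup p ↥H' := by
      apply isPGroup_of_elem
      intro z hz
      rw [hH', mem_cj, inv_inv] at hz
      obtain ⟨n, hn⟩ := isPGroup_elem hQpG _ hz
      refine ⟨n, ?_⟩
      have h6 : g * z ^ p ^ n * g⁻¹ = 1 := by rw [← conj_pow, hn]
      calc z ^ p ^ n = g⁻¹ * (g * z ^ p ^ n * g⁻¹) * g := by group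
        _ = 1 := by rw [h6]; group
    have hHhp : IsPGroup p ↥Hh := hH'p.map π
    have hHheq : Hh = cj (π g⁻¹) Qh := by rw [hHh, hH', hQh, cj_map]
    have hcard : Nat.card ↥Hh = Nat.card ↥Qh := by
      rw [hHheq]
      exact (Nat.card_congr
        (Subgroup.equivMapOfInjective Qh _ (MulAut.conj (π g⁻¹)).injective).toEquiv).symm
    have hrelH : Hh.relIndex Kh = Qh.relIndex Kh := by
      have e1 : Hh.relIndex Kh * Nat.card ↥Hh = Nat.card ↥Kh := relindex_mul_card hHhK
      have e2 : Qh.relIndex Kh * Nat.card ↥Qh = Nat.card ↥Kh := relindex_mul_card hQhK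
      rw [hcard] at e1
      have hpos : 0 < Nat.card ↥Qh := Nat.card_pos
      exact Nat.eq_of_mul_eq_mul_right hpos (e1.trans e2.symm)
    have hndvdH : ¬ p ∣ Hh.relIndex Kh := by rw [hrelH]; exact hndvdQ
    -- Sylow conjugation inside Kh
    set A := Qh.subgroupOf Kh with hA
    set B := Hh.subgroupOf Kh with hB
    have hApG : IsPGroup p ↥A := isPGroup_subgroupOf hQhp
    have hBpG : IsPGroup p ↥B := isPGroup_subgroupOf hHhp
    obtain ⟨PA, hPA⟩ := hApG.exists_le_sylow
    obtain ⟨PB, hPB⟩ := hBpG.exists_le_sylow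
    have hAe : A = ↑PA := eq_sylow_of_not_dvd_index hp A hApG hndvdQ PA hPA
    have hBe : B = ↑PB := eq_sylow_of_not_dvd_index hp B hBpG hndvdH PB hPB
    obtain ⟨k, hk⟩ := MulAction.exists_smul_eq ↥Kh PA PB
    have hconj : cj k A = B := by
      have h7 : (↑(k • PA) : Subgroup ↥Kh) = cj k ↑PA := by
        rw [Sylow.smul_def, Sylow.pointwise_smul_def, cj_smul]
      rw [hk] at h7
      rw [← hAe, ← hBe] at h7
      exact h7.symm
    -- lift the conjugation to Γ ⧸ T
    have hlift : cj (k : Γ ⧸ T) Qh = Hh := by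
      ext z
      constructor
      · intro hz
        rw [mem_cj] at hz
        have hzK : z ∈ Kh := by
          have e : z = ↑k * ((↑k)⁻¹ * z * ↑k) * (↑k)⁻¹ := by group
          rw [e]
          exact Kh.mul_mem (Kh.mul_mem k.2 (hQhK hz)) (Kh.inv_mem k.2)
        have h8 : (⟨z, hzK⟩ : ↥Kh) ∈ cj k A := by
          rw [mem_cj, hA, Subgroup.mem_subgroupOf]
          simpa using hz
        rw [hconj, hB, Subgroup.mem_subgroupOf] at h8
        exact h8
      · intro hz
        have hzK : z ∈ Kh := hHhK hz
        have hzB : (⟨z, hzK⟩ : ↥Kh) ∈ B := by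
          rw [hB, Subgroup.mem_subgroupOf]
          exact hz
        rw [← hconj, mem_cj, hA, Subgroup.mem_subgroupOf] at hzB
        rw [mem_cj]
        simpa using hzB
    -- decompose k = c' * q'
    have hkm : (k : Γ ⧸ T) ∈ (Ch : Set (Γ ⧸ T)) * (Qh : Set (Γ ⧸ T)) := by
      rw [← Subgroup.normal_mul Ch Qh, sup_comm, ← hKhQ]
      exact k.2
    obtain ⟨c', hc', q', hq', hcq⟩ := hkm
    have hcjk : cj (k : Γ ⧸ T) Qh = cj c' Qh := by
      rw [← hcq, ← cj_cj, cj_self hq']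
    obtain ⟨c, hcC, rfl⟩ := hc'
    -- pull everything back to Γ
    have himg : (cj c Q).map π = H'.map π := by
      rw [cj_map, ← hQh]
      calc cj (π c) Qh = cj ↑k Qh := hcjk.symm
        _ = Hh := hlift
    have hsup : cj c Q ⊔ T = H' ⊔ T := by
      have h9 := congrArg (Subgroup.comap π) himg
      rwa [Subgroup.comap_map_eq, Subgroup.comap_map_eq, hπ, QuotientGroup.ker_mk'] at h9
    have hcQK : cj c Q ≤ K := by
      have h10 : cj c Q ≤ cj c K := cj_mono c hQK
      rwa [cj_self (hCK hcC)] at h10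
    have hMcQ : M ≤ cj c Q := by
      have hcM : cj c M = M := cjM c (cj_self (hCK hcC))
      rw [← hcM]
      exact cj_mono c hMQ
    have hTKM : T ⊓ K = M := by rw [hM, inf_comm]
    have e1 : cj c Q = H' := by
      apply le_antisymm
      · have h11 : cj c Q ≤ (H' ⊔ T) ⊓ K :=
          le_inf (by rw [← hsup]; exact le_sup_left) hcQK
        rwa [sup_inf_of_normal H' T K hH'K, hTKM, sup_eq_left.mpr hMH'] at h11
      · have h12 : H' ≤ (cj c Q ⊔ T) ⊓ K :=
          le_inf (by rw [hsup]; exact le_sup_left) hH'K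
        rwa [sup_inf_of_normal (cj c Q) T K hcQK, hTKM, sup_eq_left.mpr hMcQ] at h12
    -- conclude
    have hgc : g * c ∈ Subgroup.normalizer (Q : Set Γ) := by
      apply mem_normalizer_of_cj
      rw [← cj_cj, e1, hH', cj_cj, mul_inv_cancel, cj_one]
    refine ⟨g * c, hgc, ?_⟩
    rw [map_mul, (hπ'ker c).mpr hcC, mul_one]
end

section
/- Let W be a conjugacy functor for a fusion system F over a discrete p-toral group S, and P ≤ S. Then: (a) N_S(P) ≤ N_S(W(P)); (b) W(P) = W(N_S(W(P))) if and only if W(P) = W(S); and (c) N_S(W(P)) = P if and only if P = S. -/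
open scoped Pointwise

/-- A fusion system over a (discrete `p`-toral) group `S`: a collection of injective
group homomorphisms between subgroups of `S` (recorded as homomorphisms into `S`),
containing all conjugation maps and closed under composition, restriction and
inverses of isomorphisms. -/
structure FusionSystem (S : Type*) [Group S] where
  /-- `IsMor P φ` means `φ : P → S` is a morphism of the fusion system
  (with target the subgroup `φ.range`). -/
  IsMor : (P : Subgroup S) → (↥P →* S) → Prop
  inj : ∀ (P : Subgroup S) (φ : ↥P →* S), IsMor P φ → Function.Injective φ
  conj_isMor : ∀ (P : Subgroup S) (g : S),
    IsMor P ((MulAut.conj g).toMonoidHom.comp P.subtype)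
  comp_isMor : ∀ (P Q : Subgroup S) (φ : ↥P →* S) (ψ : ↥Q →* S)
    (h : ∀ x : ↥P, φ x ∈ Q), IsMor P φ → IsMor Q ψ →
    IsMor P (ψ.comp (φ.codRestrict Q h))
  restrict_isMor : ∀ (P P' : Subgroup S) (h : P' ≤ P) (φ : ↥P →* S),
    IsMor P φ → IsMor P' (φ.comp (Subgroup.inclusion h))
  inv_isMor : ∀ (P Q : Subgroup S) (φ : ↥P →* S), IsMor P φ → φ.range = Q →
    ∃ ψ : ↥Q →* S, IsMor Q ψ ∧ ∀ (x : ↥P) (hx : φ x ∈ Q), ψ ⟨φ x, hx⟩ = x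

namespace FusionSystem

variable {S : Type*} [Group S] (F : FusionSystem S)

/-- `Q` is `F`-conjugate to `P`. -/
def IsConjTo (Q P : Subgroup S) : Prop :=
  ∃ φ : ↥Q →* S, F.IsMor Q φ ∧ φ.range = P

end FusionSystem

/-- `W` is an `F`-conjugacy functor. -/
def IsConjugacyFunctor {S : Type*} [Group S] (F : FusionSystem S)
    (W : Subgroup S → Subgroup S) : Prop :=
  (∀ P : Subgroup S, W P ≤ P) ∧
    (∀ P : Subgroup S, P ≠ ⊥ → W P ≠ ⊥) ∧
    ∀ (P : Subgroup S) (φ : ↥P →* S), F.IsMor P φ →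
      ((W P).subgroupOf P).map φ = W φ.range


section AuxProofs

lemma IsPTorus.mul_comm' {p : ℕ} {T : Type*} [Group T] (h : IsPTorus p T) (x y : T) :
    x * y = y * x := by
  obtain ⟨r, ⟨e⟩⟩ := h
  apply e.injective
  rw [map_mul, map_mul, mul_comm]

lemma IsPTorus.exists_pow_eq_one {p : ℕ} {T : Type*} [Group T] (h : IsPTorus p T) (x : T) :
    ∃ n : ℕ, x ^ p ^ n = 1 := by
  obtain ⟨r, ⟨e⟩⟩ := h
  have hex : ∀ i : Fin r,
      ∃ n : ℕ, (p ^ n : ℕ) • (((e x).toAdd i : Prufer p) : AddCircle (1 : ℚ)) = 0 :=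
    fun i => ((e x).toAdd i).2
  choose n hn using hex
  refine ⟨Finset.univ.sup n, ?_⟩
  apply e.injective
  rw [map_pow, map_one]
  have hz : ((e x) ^ p ^ Finset.univ.sup n).toAdd = 0 := by
    rw [toAdd_pow]
    funext i
    rw [Pi.smul_apply, Pi.zero_apply]
    have hle : n i ≤ Finset.univ.sup n := Finset.le_sup (Finset.mem_univ i)
    have hsplit : p ^ Finset.univ.sup n = p ^ (Finset.univ.sup n - n i) * p ^ n i := by
      rw [← pow_add, Nat.sub_add_cancel hle]
    rw [hsplit, mul_smul]
    have h0 : (p ^ n i : ℕ) • (e x).toAdd i = 0 := by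
      apply Subtype.ext
      simpa using hn i
    rw [h0, smul_zero]
  apply Multiplicative.toAdd.injective
  rw [hz, toAdd_one]

lemma eq_top_of_normalizer_le {p : ℕ} {S : Type*} [Group S] (hp : p.Prime)
    (hS : IsDiscretePToral p S) {H : Subgroup S} (hself : Subgroup.normalizer (H : Set S) ≤ H) : H = ⊤ := by
  obtain ⟨T, hTn, hTt, k, hcard⟩ := hS
  haveI := hTn
  haveI : Finite (S ⧸ T) :=
    Nat.finite_of_card_ne_zero (by rw [hcard]; exact (pow_pos hp.pos k).ne')
  have hQpow : ∀ g : S ⧸ T, g ^ p ^ k = 1 := fun g => by rw [← hcard]; exact pow_card_eq_one'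
  have hTcomm : ∀ x y : S, x ∈ T → y ∈ T → x * y = y * x := by
    intro x y hx hy
    exact congrArg Subtype.val (hTt.mul_comm' ⟨x, hx⟩ ⟨y, hy⟩)
  have hTtor : ∀ x : S, x ∈ T → ∃ n : ℕ, x ^ p ^ n = 1 := by
    intro x hx
    obtain ⟨n, hn⟩ := hTt.exists_pow_eq_one ⟨x, hx⟩
    refine ⟨n, ?_⟩
    have := congrArg Subtype.val hn
    simpa using this
  haveI : Fact p.Prime := ⟨hp⟩
  by_cases hTH : T ≤ H
  · -- the torus is contained in H: use the finite p-group S/T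
    have hQp : IsPGroup p (S ⧸ T) := fun g => ⟨k, hQpow g⟩
    haveI := hQp.isNilpotent
    have hnc := normalizerCondition_of_isNilpotent (G := S ⧸ T)
    set H' := H.map (QuotientGroup.mk' T) with hH'def
    have hmem : ∀ a : S, (QuotientGroup.mk' T) a ∈ H' ↔ a ∈ H := by
      intro a
      constructor
      · intro h
        rw [hH'def, Subgroup.mem_map] at h
        obtain ⟨b, hb, hba⟩ := h
        have hba' : b⁻¹ * a ∈ T := by
          rw [← QuotientGroup.eq]
          exact hba
        have : b * (b⁻¹ * a) ∈ H := mul_mem hb (hTH hba')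
        simpa using this
      · intro h; exact Subgroup.mem_map_of_mem _ h
    have hH'self : Subgroup.normalizer (H' : Set (S ⧸ T)) = H' := by
      refine le_antisymm ?_ Subgroup.le_normalizer
      intro x hx
      obtain ⟨g, rfl⟩ := QuotientGroup.mk'_surjective T x
      rw [Subgroup.mem_normalizer_iff] at hx
      have hgnorm : g ∈ Subgroup.normalizer (H : Set S) := by
        rw [Subgroup.mem_normalizer_iff]
        intro h
        rw [← hmem h, ← hmem (g * h * g⁻¹), map_mul, map_mul, map_inv]
        exact hx _
      exact (hmem g).mpr (hself hgnorm)
    have htop := (normalizerCondition_iff_only_full_group_self_normalizing.mp hnc) H' hH'self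
    rw [eq_top_iff]
    intro a _
    exact (hmem a).mp (by rw [htop]; trivial)
  · -- the torus is not contained in H
    exfalso
    rw [SetLike.not_le_iff_exists] at hTH
    obtain ⟨t₁, ht₁T, ht₁H⟩ := hTH
    set O : Set S := (fun h => h * t₁ * h⁻¹) '' (H : Set S) with hOdef
    have hOT : O ⊆ (T : Set S) := by
      rintro _ ⟨a, ha, rfl⟩
      exact hTn.conj_mem t₁ ht₁T a
    have hOfin : O.Finite := by
      let g : S ⧸ T → S := Quotient.lift (fun a => a * t₁ * a⁻¹) (by
        intro a b hab
        replace hab : a⁻¹ * b ∈ T := QuotientGroup.leftRel_apply.mp hab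
        have key : (a⁻¹ * b) * t₁ * (a⁻¹ * b)⁻¹ = t₁ := by
          rw [hTcomm _ _ hab ht₁T]; group
        calc a * t₁ * a⁻¹ = a * ((a⁻¹ * b) * t₁ * (a⁻¹ * b)⁻¹) * a⁻¹ := by rw [key]
        _ = b * t₁ * b⁻¹ := by group)
      have hsub : O ⊆ Set.range g := by
        rintro _ ⟨a, ha, rfl⟩
        exact ⟨QuotientGroup.mk a, rfl⟩
      exact (Set.finite_range g).subset hsub
    set U : Subgroup S := Subgroup.closure O with hUdef
    have hUT : U ≤ T := (Subgroup.closure_le T).mpr hOT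
    have ht₁U : t₁ ∈ U := Subgroup.subset_closure ⟨1, H.one_mem, by group⟩
    haveI hOsub : Finite ↥O := hOfin.to_subtype
    haveI hUfg : Group.FG ↥U := Group.closure_finite_fg O
    letI commU : CommGroup ↥U :=
      { (inferInstance : Group ↥U) with
        mul_comm := fun a b => Subtype.ext (hTcomm _ _ (hUT a.2) (hUT b.2)) }
    have hUtor : Monoid.IsTorsion ↥U := by
      intro x
      obtain ⟨n, hn⟩ := hTtor x (hUT x.2)
      refine isOfFinOrder_iff_pow_eq_one.mpr ⟨p ^ n, pow_pos hp.pos n, ?_⟩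
      exact Subtype.ext (by simpa using hn)
    haveI hUfin : Finite ↥U := @CommGroup.finite_of_fg_torsion ↥U commU hUfg hUtor
    have hUp : IsPGroup p ↥U := by
      intro x
      obtain ⟨n, hn⟩ := hTtor x (hUT x.2)
      exact ⟨n, Subtype.ext (by simpa using hn)⟩
    obtain ⟨nU, hnU⟩ := hUp.exists_card_eq
    set V : Subgroup ↥U := H.subgroupOf U with hVdef
    have ht₁V : (⟨t₁, ht₁U⟩ : ↥U) ∉ V := by
      intro h
      exact ht₁H ((Subgroup.mem_subgroupOf).mp h)
    haveI : Finite (↥U ⧸ V) := Quotient.finite _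
    have hXdvd : Nat.card (↥U ⧸ V) ∣ p ^ nU := by
      rw [← hnU]
      exact ⟨Nat.card V, Subgroup.card_eq_card_quotient_mul_card_subgroup V⟩
    have hXne1 : Nat.card (↥U ⧸ V) ≠ 1 := by
      intro h1
      haveI : Subsingleton (↥U ⧸ V) := (Nat.card_eq_one_iff_unique.mp h1).1
      have heq1 : (QuotientGroup.mk (⟨t₁, ht₁U⟩ : ↥U) : ↥U ⧸ V) = QuotientGroup.mk 1 :=
        Subsingleton.elim _ _
      rw [QuotientGroup.eq, mul_one, inv_mem_iff] at heq1
      exact ht₁V heq1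
    have hpX : p ∣ Nat.card (↥U ⧸ V) := by
      obtain ⟨m, hm, hXcard⟩ := (Nat.dvd_prime_pow hp).mp hXdvd
      rcases Nat.eq_zero_or_pos m with rfl | hmpos
      · rw [pow_zero] at hXcard; exact absurd hXcard hXne1
      · rw [hXcard]; exact dvd_pow_self p hmpos.ne'
    -- the acting p-group
    set ψ : ↥H →* S ⧸ T := (QuotientGroup.mk' T).comp H.subtype with hψdef
    have hkerT : ∀ h : ↥H, h ∈ ψ.ker ↔ (h : S) ∈ T := by
      intro h
      rw [MonoidHom.mem_ker]
      exact QuotientGroup.eq_one_iff _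
    haveI : Finite (↥H ⧸ ψ.ker) :=
      Finite.of_injective _ (QuotientGroup.kerLift_injective ψ)
    have hpowT : ∀ s : S, s ^ p ^ k ∈ T := by
      intro s
      rw [← QuotientGroup.eq_one_iff, QuotientGroup.mk_pow]
      exact hQpow _
    have hQ2p : IsPGroup p (↥H ⧸ ψ.ker) := by
      intro q
      obtain ⟨h, rfl⟩ := QuotientGroup.mk'_surjective ψ.ker q
      refine ⟨k, ?_⟩
      rw [← map_pow, QuotientGroup.mk'_apply, QuotientGroup.eq_one_iff]
      refine (hkerT _).mpr ?_
      have : ((h ^ p ^ k : ↥H) : S) = (h : S) ^ p ^ k := by simp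
      rw [this]
      exact hpowT _
    -- conjugation action
    have hconjU : ∀ (h : S), h ∈ H → ∀ u : S, u ∈ U → h * u * h⁻¹ ∈ U := by
      intro h hh
      have himg : (MulAut.conj h).toMonoidHom '' O ⊆ O := by
        rintro _ ⟨_, ⟨a, ha, rfl⟩, rfl⟩
        refine ⟨h * a, mul_mem hh ha, ?_⟩
        simp only [MulEquiv.coe_toMonoidHom, MulAut.conj_apply]
        group
      have hmap : U.map (MulAut.conj h).toMonoidHom ≤ U := by
        rw [hUdef, MonoidHom.map_closure]
        exact Subgroup.closure_mono himg
      intro u hu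
      have : (MulAut.conj h).toMonoidHom u ∈ U := hmap ⟨u, hu, rfl⟩
      simpa using this
    let conjHU : ↥H → ↥U → ↥U := fun h u =>
      ⟨(h : S) * u * (h : S)⁻¹, hconjU h h.2 u u.2⟩
    have hwd1 : ∀ (h : ↥H) (a b : ↥U), QuotientGroup.leftRel V a b →
        QuotientGroup.leftRel V (conjHU h a) (conjHU h b) := by
      intro h a b hab
      rw [QuotientGroup.leftRel_apply] at hab ⊢
      rw [Subgroup.mem_subgroupOf] at hab ⊢
      have hcoe : (((conjHU h a)⁻¹ * conjHU h b : ↥U) : S)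
          = (h : S) * ((a : S)⁻¹ * (b : S)) * (h : S)⁻¹ := by
        simp only [conjHU, Subgroup.coe_mul, Subgroup.coe_inv]
        group
      rw [hcoe]
      have hab' : (a : S)⁻¹ * (b : S) ∈ H := by
        simpa using hab
      exact mul_mem (mul_mem h.2 hab') (inv_mem h.2)
    let act : ↥H → (↥U ⧸ V) → (↥U ⧸ V) := fun h =>
      Quotient.map' (conjHU h) (fun a b hab => hwd1 h a b hab)
    have hactwd : ∀ h h' : ↥H, QuotientGroup.leftRel ψ.ker h h' → act h = act h' := by
      intro h h' hrel
      rw [QuotientGroup.leftRel_apply] at hrel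
      have hc : (h : S)⁻¹ * (h' : S) ∈ T := by
        have := (hkerT _).mp hrel
        simpa using this
      funext x
      induction x using Quotient.inductionOn' with
      | h u =>
        show Quotient.mk'' (conjHU h u) = Quotient.mk'' (conjHU h' u)
        congr 1
        apply Subtype.ext
        show (h : S) * u * (h : S)⁻¹ = (h' : S) * u * (h' : S)⁻¹
        have hcu : ((h : S)⁻¹ * h') * (u : S) * ((h : S)⁻¹ * h')⁻¹ = u := by
          rw [hTcomm _ _ hc (hUT u.2)]; group
        calc (h : S) * u * (h : S)⁻¹
            = (h : S) * (((h : S)⁻¹ * h') * u * ((h : S)⁻¹ * h')⁻¹) * (h : S)⁻¹ := by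
              rw [hcu]
        _ = (h' : S) * u * (h' : S)⁻¹ := by group
    let actQ : (↥H ⧸ ψ.ker) → (↥U ⧸ V) → (↥U ⧸ V) := fun q =>
      Quotient.liftOn' q act (fun a b hab => hactwd a b hab)
    letI : MulAction (↥H ⧸ ψ.ker) (↥U ⧸ V) :=
      { smul := actQ
        one_smul := by
          intro x
          show actQ 1 x = x
          induction x using Quotient.inductionOn' with
          | h u =>
            show Quotient.mk'' (conjHU 1 u) = Quotient.mk'' u
            congr 1
            exact Subtype.ext (by simp [conjHU])
        mul_smul := by
          intro q₁ q₂ x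
          induction q₁ using Quotient.inductionOn' with
          | h h₁ =>
            induction q₂ using Quotient.inductionOn' with
            | h h₂ =>
              induction x using Quotient.inductionOn' with
              | h u =>
                show Quotient.mk'' (conjHU (h₁ * h₂) u)
                    = Quotient.mk'' (conjHU h₁ (conjHU h₂ u))
                congr 1
                apply Subtype.ext
                simp only [conjHU, Subgroup.coe_mul, Subgroup.coe_inv]
                group }
    have hmod := hQ2p.card_modEq_card_fixedPoints (↥U ⧸ V)
    have hX0 : Nat.card (↥U ⧸ V) ≡ 0 [MOD p] := (Nat.modEq_zero_iff_dvd).mpr hpX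
    have hfix0 : Nat.card (MulAction.fixedPoints (↥H ⧸ ψ.ker) (↥U ⧸ V)) ≡ 0 [MOD p] :=
      hmod.symm.trans hX0
    have h1fix : (QuotientGroup.mk (1 : ↥U) : ↥U ⧸ V)
        ∈ MulAction.fixedPoints (↥H ⧸ ψ.ker) (↥U ⧸ V) := by
      intro q
      induction q using Quotient.inductionOn' with
      | h h =>
        show Quotient.mk'' (conjHU h 1) = _
        congr 1
        exact Subtype.ext (by simp [conjHU])
    have hcardpos : 0 < Nat.card (MulAction.fixedPoints (↥H ⧸ ψ.ker) (↥U ⧸ V)) := by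
      haveI : Nonempty (MulAction.fixedPoints (↥H ⧸ ψ.ker) (↥U ⧸ V)) := ⟨⟨_, h1fix⟩⟩
      exact Nat.card_pos
    have hdvdfix : p ∣ Nat.card (MulAction.fixedPoints (↥H ⧸ ψ.ker) (↥U ⧸ V)) :=
      (Nat.modEq_zero_iff_dvd).mp hfix0
    have hlt : 1 < Nat.card (MulAction.fixedPoints (↥H ⧸ ψ.ker) (↥U ⧸ V)) :=
      lt_of_lt_of_le hp.one_lt (Nat.le_of_dvd hcardpos hdvdfix)
    haveI := Finite.one_lt_card_iff_nontrivial.mp hlt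
    obtain ⟨y, hy⟩ := exists_ne
      (⟨QuotientGroup.mk 1, h1fix⟩ : MulAction.fixedPoints (↥H ⧸ ψ.ker) (↥U ⧸ V))
    have hy1 : (y : ↥U ⧸ V) ≠ QuotientGroup.mk 1 := fun h => hy (Subtype.ext h)
    obtain ⟨u, hu⟩ := Quotient.exists_rep (y : ↥U ⧸ V)
    have huH : (u : S) ∉ H := by
      intro hmem
      apply hy1
      rw [← hu]
      refine (QuotientGroup.eq).mpr ?_
      rw [mul_one, inv_mem_iff]
      exact (Subgroup.mem_subgroupOf).mpr hmem
    have hfixu : ∀ h : ↥H, (conjHU h u)⁻¹ * u ∈ V := by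
      intro h
      have := y.2 (QuotientGroup.mk h)
      rw [← hu] at this
      have h2 : (Quotient.mk'' (conjHU h u) : ↥U ⧸ V) = Quotient.mk'' u := this
      rw [← QuotientGroup.leftRel_apply]
      exact Quotient.eq''.mp h2
    have hrel : ∀ h : S, h ∈ H → ∃ d : S, d ∈ H ∧ d ∈ T ∧ h * u * h⁻¹ = (u : S) * d⁻¹ := by
      intro h hh
      have hv := hfixu ⟨h, hh⟩
      refine ⟨(((conjHU ⟨h, hh⟩ u)⁻¹ * u : ↥U) : S), (Subgroup.mem_subgroupOf).mp hv,
        hUT ((conjHU ⟨h, hh⟩ u)⁻¹ * u).2, ?_⟩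
      have hdval : (((conjHU ⟨h, hh⟩ u)⁻¹ * u : ↥U) : S) = (h * u * h⁻¹)⁻¹ * u := by
        simp only [conjHU, Subgroup.coe_mul, Subgroup.coe_inv]
      rw [hdval]
      group
    have hunorm : (u : S) ∈ Subgroup.normalizer (H : Set S) := by
      rw [Subgroup.mem_normalizer_iff]
      intro n
      constructor
      · intro hn
        obtain ⟨d, hdH, hdT, hdeq⟩ := hrel n⁻¹ (inv_mem hn)
        rw [inv_inv] at hdeq
        have hcomm := hTcomm (u : S) d (hUT u.2) hdT
        have h3 : (u : S) * d⁻¹ = d⁻¹ * (u : S) := by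
          calc (u : S) * d⁻¹ = d⁻¹ * (d * (u : S)) * d⁻¹ := by group
          _ = d⁻¹ * ((u : S) * d) * d⁻¹ := by rw [← hcomm]
          _ = d⁻¹ * (u : S) := by group
        have key : (u : S) * n * (u : S)⁻¹ = n * d⁻¹ := by
          calc (u : S) * n * (u : S)⁻¹
              = n * (n⁻¹ * (u : S) * n) * (u : S)⁻¹ := by group
          _ = n * ((u : S) * d⁻¹) * (u : S)⁻¹ := by rw [hdeq]
          _ = n * (d⁻¹ * (u : S)) * (u : S)⁻¹ := by rw [h3]
          _ = n * d⁻¹ := by group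
        rw [key]
        exact mul_mem hn (inv_mem hdH)
      · intro hn
        obtain ⟨d, hdH, hdT, hdeq⟩ := hrel ((u : S) * n * (u : S)⁻¹) hn
        have h1 : ((u : S) * n * (u : S)⁻¹) * (u : S) = (u : S) * d⁻¹ * ((u : S) * n * (u : S)⁻¹) := by
          calc ((u : S) * n * (u : S)⁻¹) * (u : S)
              = (((u : S) * n * (u : S)⁻¹) * (u : S) * ((u : S) * n * (u : S)⁻¹)⁻¹)
                * ((u : S) * n * (u : S)⁻¹) := by group
          _ = (u : S) * d⁻¹ * ((u : S) * n * (u : S)⁻¹) := by rw [hdeq]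
        have h2 : n = d⁻¹ * ((u : S) * n * (u : S)⁻¹) := by
          calc n = (u : S)⁻¹ * (((u : S) * n * (u : S)⁻¹) * (u : S)) := by group
          _ = (u : S)⁻¹ * ((u : S) * d⁻¹ * ((u : S) * n * (u : S)⁻¹)) := by rw [h1]
          _ = d⁻¹ * ((u : S) * n * (u : S)⁻¹) := by group
        rw [h2]
        exact mul_mem (inv_mem hdH) hn
    exact huH (hself hunorm)

lemma conjFunctor_normalizer_le {S : Type*} [Group S] {F : FusionSystem S}
    {W : Subgroup S → Subgroup S} (hW : IsConjugacyFunctor F W) (P : Subgroup S) :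
    Subgroup.normalizer (P : Set S) ≤ Subgroup.normalizer (W P : Set S) := by
  intro g hg
  have hg' := Subgroup.mem_normalizer_iff.mp hg
  set φ : ↥P →* S := (MulAut.conj g).toMonoidHom.comp P.subtype with hφ
  have hφapp : ∀ x : ↥P, φ x = g * x * g⁻¹ := fun x => rfl
  have hmor := F.conj_isMor P g
  have hrange : φ.range = P := by
    ext x
    simp only [MonoidHom.mem_range]
    constructor
    · rintro ⟨y, rfl⟩
      rw [hφapp]
      exact (hg' y).mp y.2
    · intro hx
      have hginv := Subgroup.mem_normalizer_iff.mp (inv_mem hg)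
      have hx' : g⁻¹ * x * g ∈ P := by
        have := (hginv x).mp hx
        simpa using this
      exact ⟨⟨g⁻¹ * x * g, hx'⟩, by rw [hφapp]; group⟩
  have heq := hW.2.2 P φ hmor
  rw [hrange] at heq
  rw [Subgroup.mem_normalizer_iff]
  intro h
  constructor
  · intro hh
    have hhP : h ∈ P := hW.1 P hh
    have hmm : φ ⟨h, hhP⟩ ∈ ((W P).subgroupOf P).map φ :=
      Subgroup.mem_map_of_mem _ (by rwa [Subgroup.mem_subgroupOf])
    rw [heq] at hmm
    rwa [hφapp] at hmm
  · intro hh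
    rw [← heq, Subgroup.mem_map] at hh
    obtain ⟨x, hx, hxe⟩ := hh
    rw [hφapp] at hxe
    have hxh : (x : S) = h := by
      have := congrArg (fun z => g⁻¹ * z * g) hxe
      simpa [mul_assoc] using this
    rw [← hxh]
    exact (Subgroup.mem_subgroupOf).mp hx

end AuxProofs

/-- For an `F`-conjugacy functor `W` over a discrete `p`-toral group
`S` and `P ≤ S`: (a) `N_S(P) ≤ N_S(W(P))`; (b) `W(P) = W(N_S(W(P)))` iff
`W(P) = W(S)`; (c) `N_S(W(P)) = P` iff `P = S`. -/
theorem conjugacy_functor_normalizer_props (p : ℕ) (hp : p.Prime) {S : Type*} [Group S]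
    (hS : IsDiscretePToral p S) (F : FusionSystem S)
    (W : Subgroup S → Subgroup S) (hW : IsConjugacyFunctor F W) (P : Subgroup S) :
    Subgroup.normalizer (P : Set S) ≤ Subgroup.normalizer (W P : Set S) ∧
      (W P = W (Subgroup.normalizer (W P : Set S)) ↔ W P = W ⊤) ∧
      (Subgroup.normalizer (W P : Set S) = P ↔ P = ⊤) := by
  have ha : ∀ Q : Subgroup S, Subgroup.normalizer (Q : Set S) ≤ Subgroup.normalizer (W Q : Set S) :=
    fun Q => conjFunctor_normalizer_le hW Q
  have hgrow : ∀ H : Subgroup S, Subgroup.normalizer (H : Set S) ≤ H → H = ⊤ :=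
    fun H h => eq_top_of_normalizer_le hp hS h
  have hWtopnorm : Subgroup.normalizer (W ⊤ : Set S) = ⊤ := by
    rw [eq_top_iff]
    intro x _
    exact ha ⊤ (Subgroup.mem_normalizer_iff.mpr (by simp))
  refine ⟨ha P, ⟨?_, ?_⟩, ?_, ?_⟩
  · intro hb
    have hN : Subgroup.normalizer (Subgroup.normalizer (W P : Set S) : Set S) ≤ Subgroup.normalizer (W P : Set S) := by
      calc Subgroup.normalizer (Subgroup.normalizer (W P : Set S) : Set S) ≤ Subgroup.normalizer (W (Subgroup.normalizer (W P : Set S)) : Set S) := ha _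
      _ = Subgroup.normalizer (W P : Set S) := by rw [← hb]
    have htop := hgrow _ hN
    rw [htop] at hb
    exact hb
  · intro hb
    rw [hb, hWtopnorm]
  · intro hc
    apply hgrow
    calc Subgroup.normalizer (P : Set S) ≤ Subgroup.normalizer (W P : Set S) := ha P
    _ = P := hc
  · rintro rfl
    exact hWtopnorm
end

section
/- Let n ≥ 1, m = 2n+1, and let G = S_m be the symmetric group on {1,...,m}. Let H = {g ∈ G : g permutes the set {{1,2},{3,4},...,{2n-1,2n}} of pairs}, i.e., the stabilizer of the partition into these n pairs together with the singleton {2n+1}, and let K = {g ∈ G : g({1,2}) = {1,2}} be the setwise stabilizer of {1,2}. Let Γ* = {g ∈ G : there exist 1 ≤ i, j ≤ n with g({2i-1,2i}) = {2j-1,2j}}. Then Γ* = H K H. -/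
open scoped Pointwise

def pr (n : ℕ) (i : Fin n) : Finset (Fin (2 * n + 1)) :=
  {⟨2 * (i : ℕ), by have := i.isLt; omega⟩, ⟨2 * (i : ℕ) + 1, by have := i.isLt; omega⟩}

def sig (n : ℕ) (i : Fin n) : Equiv.Perm (Fin (2 * n + 1)) :=
  Equiv.swap ⟨2 * (i : ℕ), by have := i.isLt; omega⟩ ⟨0, by have := i.isLt; omega⟩ *
  Equiv.swap ⟨2 * (i : ℕ) + 1, by have := i.isLt; omega⟩ ⟨1, by have := i.isLt; omega⟩

lemma pr_inj (n : ℕ) {i j : Fin n} (h : pr n i = pr n j) : i = j := by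
  have : (⟨2 * (i : ℕ), by have := i.isLt; omega⟩ : Fin (2*n+1)) ∈ pr n j := by
    rw [← h]; simp [pr]
  simp only [pr, Finset.mem_insert, Finset.mem_singleton, Fin.mk.injEq] at this
  exact Fin.ext (by omega)

lemma sig_apply_a (n : ℕ) (i : Fin n) :
    sig n i ⟨2 * (i : ℕ), by have := i.isLt; omega⟩ = ⟨0, by have := i.isLt; omega⟩ := by
  unfold sig
  rw [Equiv.Perm.mul_apply]
  have h1 : Equiv.swap (⟨2 * (i : ℕ) + 1, by have := i.isLt; omega⟩ : Fin (2*n+1))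
      ⟨1, by have := i.isLt; omega⟩ ⟨2 * (i : ℕ), by have := i.isLt; omega⟩ =
      ⟨2 * (i : ℕ), by have := i.isLt; omega⟩ :=
    Equiv.swap_apply_of_ne_of_ne (by simp only [ne_eq, Fin.mk.injEq]; omega)
      (by simp only [ne_eq, Fin.mk.injEq]; omega)
  rw [h1, Equiv.swap_apply_left]

lemma sig_apply_b (n : ℕ) (i : Fin n) :
    sig n i ⟨2 * (i : ℕ) + 1, by have := i.isLt; omega⟩ = ⟨1, by have := i.isLt; omega⟩ := by
  unfold sig
  rw [Equiv.Perm.mul_apply, Equiv.swap_apply_left]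
  exact Equiv.swap_apply_of_ne_of_ne (by simp only [ne_eq, Fin.mk.injEq]; omega)
    (by simp only [ne_eq, Fin.mk.injEq]; omega)

lemma sig_apply_c (n : ℕ) (i : Fin n) :
    sig n i ⟨0, by have := i.isLt; omega⟩ = ⟨2 * (i : ℕ), by have := i.isLt; omega⟩ := by
  unfold sig
  rw [Equiv.Perm.mul_apply]
  have h1 : Equiv.swap (⟨2 * (i : ℕ) + 1, by have := i.isLt; omega⟩ : Fin (2*n+1))
      ⟨1, by have := i.isLt; omega⟩ ⟨0, by have := i.isLt; omega⟩ =
      ⟨0, by have := i.isLt; omega⟩ :=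
    Equiv.swap_apply_of_ne_of_ne (by simp only [ne_eq, Fin.mk.injEq]; omega)
      (by simp only [ne_eq, Fin.mk.injEq]; omega)
  rw [h1, Equiv.swap_apply_right]

lemma sig_apply_d (n : ℕ) (i : Fin n) :
    sig n i ⟨1, by have := i.isLt; omega⟩ = ⟨2 * (i : ℕ) + 1, by have := i.isLt; omega⟩ := by
  unfold sig
  rw [Equiv.Perm.mul_apply, Equiv.swap_apply_right]
  exact Equiv.swap_apply_of_ne_of_ne (by simp only [ne_eq, Fin.mk.injEq]; omega)
    (by simp only [ne_eq, Fin.mk.injEq]; omega)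

lemma sig_apply_other (n : ℕ) (i : Fin n) (x : Fin (2 * n + 1))
    (h1 : (x : ℕ) ≠ 2 * i) (h2 : (x : ℕ) ≠ 2 * i + 1) (h3 : (x : ℕ) ≠ 0) (h4 : (x : ℕ) ≠ 1) :
    sig n i x = x := by
  unfold sig
  rw [Equiv.Perm.mul_apply]
  have hA : Equiv.swap (⟨2 * (i : ℕ) + 1, by have := i.isLt; omega⟩ : Fin (2*n+1))
      ⟨1, by have := i.isLt; omega⟩ x = x :=
    Equiv.swap_apply_of_ne_of_ne (by rw [ne_eq, Fin.ext_iff]; exact h2)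
      (by rw [ne_eq, Fin.ext_iff]; exact h4)
  rw [hA]
  exact Equiv.swap_apply_of_ne_of_ne (by rw [ne_eq, Fin.ext_iff]; exact h1)
    (by rw [ne_eq, Fin.ext_iff]; exact h3)

lemma sig_pr_self (n : ℕ) (i : Fin n) :
    (pr n i).image (sig n i) = pr n ⟨0, by have := i.isLt; omega⟩ := by
  simp only [pr, Finset.image_insert, Finset.image_singleton, sig_apply_a, sig_apply_b]

lemma sig_pr_zero (n : ℕ) (i : Fin n) (h : 0 < n) :
    (pr n ⟨0, h⟩).image (sig n i) = pr n i := by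
  have e : pr n ⟨0, h⟩ = ({⟨0, by omega⟩, ⟨1, by omega⟩} : Finset (Fin (2*n+1))) := rfl
  rw [e]
  simp only [Finset.image_insert, Finset.image_singleton, sig_apply_c, sig_apply_d, pr]

lemma sig_pr_other (n : ℕ) (i j : Fin n) (h1 : j ≠ i) (h2 : (j : ℕ) ≠ 0) :
    (pr n j).image (sig n i) = pr n j := by
  have hji : (j : ℕ) ≠ (i : ℕ) := fun h => h1 (Fin.ext h)
  simp only [pr, Finset.image_insert, Finset.image_singleton]
  rw [sig_apply_other n i _ (show 2*(j:ℕ) ≠ 2*(i:ℕ) by omega)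
      (show 2*(j:ℕ) ≠ 2*(i:ℕ)+1 by omega) (show 2*(j:ℕ) ≠ 0 by omega)
      (show 2*(j:ℕ) ≠ 1 by omega),
    sig_apply_other n i _ (show 2*(j:ℕ)+1 ≠ 2*(i:ℕ) by omega)
      (show 2*(j:ℕ)+1 ≠ 2*(i:ℕ)+1 by omega) (show 2*(j:ℕ)+1 ≠ 0 by omega)
      (show 2*(j:ℕ)+1 ≠ 1 by omega)]

lemma sig_mem (n : ℕ) (i j : Fin n) : ∃ j', (pr n j).image (sig n i) = pr n j' := by
  by_cases h1 : j = i
  · subst h1; exact ⟨_, sig_pr_self n j⟩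
  by_cases h2 : (j : ℕ) = 0
  · have : j = ⟨0, j.pos⟩ := Fin.ext h2
    rw [this]; exact ⟨i, sig_pr_zero n i j.pos⟩
  · exact ⟨j, sig_pr_other n i j h1 h2⟩

lemma image_mul {α : Type*} [DecidableEq α] (g h : Equiv.Perm α) (s : Finset α) :
    s.image ⇑(g * h) = (s.image ⇑h).image ⇑g := by
  rw [Finset.image_image]; rfl

lemma image_inv_eq {α : Type*} [DecidableEq α] {s t : Finset α} (σ : Equiv.Perm α)
    (h : s.image ⇑σ = t) : t.image ⇑σ⁻¹ = s := by
  rw [← h, Finset.image_image]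
  ext x; simp

open scoped Pointwise in
/-- In `G = S_m`, `m = 2n+1`, with `H` the stabilizer of the
partition into the pairs `{2i-1, 2i}` (`1 ≤ i ≤ n`) and the singleton, and `K` the
setwise stabilizer of `{1,2}`, the set
`Γ* = {g : g maps some pair to some pair}` equals `H K H`. -/
theorem gammaStar_eq_HKH (n m : ℕ) (hn : 1 ≤ n) (hm : m = 2 * n + 1)
    (pair : Fin n → Finset (Fin m))
    (hpair : ∀ i : Fin n,
      pair i = {⟨2 * (i : ℕ), by have := i.isLt; omega⟩,
                ⟨2 * (i : ℕ) + 1, by have := i.isLt; omega⟩}) :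
    {g : Equiv.Perm (Fin m) | ∃ i j : Fin n, (pair i).image g = pair j} =
      {g : Equiv.Perm (Fin m) | ∀ i : Fin n, ∃ j : Fin n, (pair i).image g = pair j} *
        ({g : Equiv.Perm (Fin m) | (pair ⟨0, hn⟩).image g = pair ⟨0, hn⟩} *
          {g : Equiv.Perm (Fin m) | ∀ i : Fin n, ∃ j : Fin n, (pair i).image g = pair j}) := by
  
  subst hm
  have hp : pair = pr n := funext fun i => hpair i
  subst hp
  ext g
  simp only [Set.mem_setOf_eq, Set.mem_mul]
  constructor
  · rintro ⟨i, j, hij⟩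
    refine ⟨sig n j, fun i' => sig_mem n j i',
      (sig n j)⁻¹ * g * (sig n i)⁻¹ * sig n i,
      ⟨(sig n j)⁻¹ * g * (sig n i)⁻¹, ?_, sig n i, fun i' => sig_mem n i i', rfl⟩, by group⟩
    have h1 : (pr n ⟨0, hn⟩).image ⇑(sig n i)⁻¹ = pr n i :=
      image_inv_eq _ (sig_pr_self n i)
    have h2 : (pr n j).image ⇑(sig n j)⁻¹ = pr n ⟨0, hn⟩ :=
      image_inv_eq _ (sig_pr_zero n j hn)
    rw [image_mul, image_mul, h1, hij, h2]
  · rintro ⟨h₁, hh₁, _, ⟨k, hk, h₂, hh₂, rfl⟩, rfl⟩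
    have hinj : Function.Injective (fun i => (hh₂ i).choose) := by
      intro a b hab
      have ha := (hh₂ a).choose_spec
      have hb := (hh₂ b).choose_spec
      simp only at hab
      rw [hab, ← hb] at ha
      exact pr_inj n (Finset.image_injective h₂.injective ha)
    obtain ⟨i, hi⟩ := Finite.surjective_of_injective hinj ⟨0, hn⟩
    obtain ⟨j, hj⟩ := hh₁ ⟨0, hn⟩
    refine ⟨i, j, ?_⟩
    have h2i : (pr n i).image ⇑h₂ = pr n ⟨0, hn⟩ := by
      have := (hh₂ i).choose_spec
      rwa [show (hh₂ i).choose = ⟨0, hn⟩ from hi] at this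
    rw [image_mul, image_mul, h2i, hk, hj]
end

section
/- Let G be a finite group acting faithfully on an abelian discrete 2-toral group D. Then for all sufficiently large n, the set of over-offenders of G on D coincides with the set of over-offenders of G on Ω_n(D). -/
open scoped Pointwise

section AuxOff

lemma mem_omega_iff {D : Type*} [CommGroup D] {p n : ℕ} {x : D} :
    x ∈ Omega p n D ↔ x ^ p ^ n = 1 := Iff.rfl

/-- `ℚ/ℤ` is divisible. -/
lemma addCircle_exists_nsmul_eq (x : AddCircle (1 : ℚ)) {n : ℕ} (hn : n ≠ 0) :
    ∃ y : AddCircle (1 : ℚ), n • y = x := by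
  induction x using QuotientAddGroup.induction_on with
  | H q =>
    refine ⟨((q / (n : ℚ) : ℚ) : AddCircle (1 : ℚ)), ?_⟩
    rw [← AddCircle.coe_nsmul, nsmul_eq_mul,
      mul_div_cancel₀ _ (by exact_mod_cast hn : (n : ℚ) ≠ 0)]

/-- The Prüfer 2-group is divisible. -/
lemma prufer_exists_nsmul_eq {x : AddCircle (1 : ℚ)} (hx : x ∈ Prufer 2) {n : ℕ}
    (hn : n ≠ 0) : ∃ y ∈ Prufer 2, n • y = x := by
  obtain ⟨s₀, hs₀⟩ := hx
  set s := s₀ + 1 with hs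
  have hsx : ((2 : ℕ) ^ s : ℕ) • x = 0 := by
    rw [hs, pow_succ, mul_comm, mul_smul, hs₀, smul_zero]
  set a := n.factorization 2 with ha
  set u := n / 2 ^ a with hu
  have hfac : 2 ^ a * u = n := Nat.ordProj_mul_ordCompl_eq_self n 2
  have hu2 : ¬ (2 ∣ u) := Nat.not_dvd_ordCompl Nat.prime_two hn
  have hco : Nat.Coprime u (2 ^ s) :=
    Nat.Coprime.pow_right s (((Nat.Prime.coprime_iff_not_dvd Nat.prime_two).2 hu2).symm)
  obtain ⟨v, -, hv⟩ := Nat.exists_mul_mod_eq_one_of_coprime hco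
    (Nat.one_lt_two_pow (by omega))
  obtain ⟨z, hz⟩ := addCircle_exists_nsmul_eq x (n := 2 ^ a) (pow_ne_zero _ two_ne_zero)
  have hzP : ((2 : ℕ) ^ (s + a) : ℕ) • z = 0 := by
    rw [pow_add, mul_smul, hz, hsx]
  refine ⟨v • z, ⟨s + a, by rw [smul_comm, hzP, smul_zero]⟩, ?_⟩
  have huv : u * v = 2 ^ s * (u * v / 2 ^ s) + 1 := by
    conv_lhs => rw [← Nat.div_add_mod (u * v) (2 ^ s)]
    rw [hv]
  calc n • (v • z) = (n * v) • z := by rw [mul_smul]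
    _ = (2 ^ a * (u * v)) • z := by rw [← hfac, mul_assoc]
    _ = (2 ^ a * (2 ^ s * (u * v / 2 ^ s) + 1)) • z := by rw [← huv]
    _ = (2 ^ a) • z + (u * v / 2 ^ s) • (((2:ℕ) ^ (s + a) : ℕ) • z) := by
        rw [← mul_smul, ← add_smul]
        congr 1
        rw [pow_add]
        ring
    _ = x := by rw [hzP, smul_zero, add_zero, hz]

/-- A discrete 2-torus is divisible. -/
lemma torus_div {D : Type*} [CommGroup D] (T : Subgroup D) {r : ℕ}
    (e : ↥T ≃* Multiplicative (Fin r → ↥(Prufer 2))) :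
    ∀ x ∈ T, ∀ m : ℕ, m ≠ 0 → ∃ y ∈ T, y ^ m = x := by
  intro x hx m hm
  set z : ↥T := ⟨x, hx⟩ with hzdef
  set f := Multiplicative.toAdd (e z) with hf
  have hroot : ∀ i, ∃ w : ↥(Prufer 2), m • w = f i := by
    intro i
    obtain ⟨y, hy, hmy⟩ := prufer_exists_nsmul_eq (f i).2 hm
    exact ⟨⟨y, hy⟩, Subtype.ext (by simpa using hmy)⟩
  choose g hg using hroot
  refine ⟨(e.symm (Multiplicative.ofAdd g) : ↥T), SetLike.coe_mem _, ?_⟩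
  have key : (e.symm (Multiplicative.ofAdd g)) ^ m = z := by
    apply e.injective
    rw [map_pow, e.apply_symm_apply, ← ofAdd_nsmul]
    have h2 : m • g = f := funext fun i => hg i
    rw [h2, hf, ofAdd_toAdd]
  have := congrArg (Subtype.val) key
  simpa using this

/-- Every element of a discrete 2-torus has 2-power order. -/
lemma torus_torsion {D : Type*} [CommGroup D] (T : Subgroup D) {r : ℕ}
    (e : ↥T ≃* Multiplicative (Fin r → ↥(Prufer 2))) :
    ∀ x ∈ T, ∃ m : ℕ, x ^ (2 : ℕ) ^ m = 1 := by
  intro x hx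
  set z : ↥T := ⟨x, hx⟩ with hzdef
  set f := Multiplicative.toAdd (e z) with hf
  have hroot : ∀ i, ∃ m : ℕ, ((2:ℕ) ^ m : ℕ) • f i = 0 := by
    intro i
    obtain ⟨mi, hmi⟩ := (f i).2
    exact ⟨mi, Subtype.ext (by simpa using hmi)⟩
  choose g hg using hroot
  refine ⟨Finset.univ.sup g, ?_⟩
  have hfz : ((2:ℕ) ^ (Finset.univ.sup g) : ℕ) • f = 0 := by
    funext i
    have hle : g i ≤ Finset.univ.sup g := Finset.le_sup (Finset.mem_univ i)
    have h2 : (2:ℕ) ^ (Finset.univ.sup g) = 2 ^ (Finset.univ.sup g - g i) * 2 ^ (g i) := by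
      rw [← pow_add, Nat.sub_add_cancel hle]
    show ((2:ℕ) ^ (Finset.univ.sup g) : ℕ) • f i = 0
    rw [h2, mul_smul, hg i, smul_zero]
  have hze : z ^ (2:ℕ) ^ (Finset.univ.sup g) = 1 := by
    apply e.injective
    rw [map_pow, map_one]
    have h1 : (e z) ^ (2:ℕ) ^ (Finset.univ.sup g) =
        Multiplicative.ofAdd (((2:ℕ) ^ (Finset.univ.sup g) : ℕ) • f) := by
      rw [ofAdd_nsmul, hf, ofAdd_toAdd]
    rw [h1, hfz, ofAdd_zero]
  have := congrArg (Subtype.val) hze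
  simpa using this

/-- The `N`-torsion of `ℚ/ℤ` is finite. -/
lemma finite_torsion_addCircle (N : ℕ) (hN : N ≠ 0) :
    {x : AddCircle (1 : ℚ) | N • x = 0}.Finite := by
  haveI : Fact ((0:ℚ) < 1) := ⟨one_pos⟩
  have hsub : {x : AddCircle (1 : ℚ) | N • x = 0} ⊆
      ⋃ d ∈ (N.divisors : Set ℕ), {u : AddCircle (1:ℚ) | addOrderOf u = d} := by
    intro x hx
    have hd := addOrderOf_dvd_of_nsmul_eq_zero hx
    exact Set.mem_biUnion (by exact_mod_cast Nat.mem_divisors.mpr ⟨hd, hN⟩) rfl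
  refine Set.Finite.subset (Set.Finite.biUnion (N.divisors).finite_toSet fun d hd => ?_) hsub
  have hd0 : 0 < d := Nat.pos_of_mem_divisors (by exact_mod_cast hd)
  have h1 : ({m : ℕ | m < d ∧ m.gcd d = 1}).Finite :=
    (Set.finite_Iio d).subset (fun m hm => hm.1)
  haveI := h1.to_subtype
  haveI : Finite ({u : AddCircle (1:ℚ) | addOrderOf u = d}) :=
    Finite.of_equiv _ (AddCircle.setAddOrderOfEquiv (1:ℚ) hd0).symm
  exact Set.toFinite _

lemma subgroup_finite_of_le {D : Type*} [CommGroup D] {H K : Subgroup D} (hHK : H ≤ K)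
    (hK : Finite ↥K) : Finite ↥H := by
  haveI := hK
  refine Finite.of_injective (fun x : ↥H => (⟨x.1, hHK x.2⟩ : ↥K)) ?_
  intro a b hab
  have h1 := congrArg Subtype.val hab
  exact Subtype.ext h1

lemma finite_omega_inf_torus {D : Type*} [CommGroup D] (T : Subgroup D) {r : ℕ}
    (e : ↥T ≃* Multiplicative (Fin r → ↥(Prufer 2))) (n : ℕ) :
    Finite ↥(Omega 2 n D ⊓ T) := by
  haveI : Finite {x : AddCircle (1:ℚ) | ((2:ℕ) ^ n : ℕ) • x = 0} :=
    (finite_torsion_addCircle _ (pow_ne_zero _ two_ne_zero)).to_subtype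
  have hmem : ∀ w : ↥(Omega 2 n D ⊓ T), ∀ i : Fin r,
      ((2:ℕ) ^ n : ℕ) •
        ((Multiplicative.toAdd (e ⟨w.1, w.2.2⟩) i : ↥(Prufer 2)) : AddCircle (1:ℚ)) = 0 := by
    intro w i
    have h0 : (⟨w.1, w.2.2⟩ : ↥T) ^ (2:ℕ) ^ n = 1 := by
      apply Subtype.ext
      have hw : (w.1 : D) ^ (2:ℕ) ^ n = 1 := w.2.1
      simpa using hw
    have h1 : (e ⟨w.1, w.2.2⟩) ^ (2:ℕ) ^ n = 1 := by rw [← map_pow, h0, map_one]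
    have h2 : ((2:ℕ) ^ n : ℕ) • Multiplicative.toAdd (e ⟨w.1, w.2.2⟩) = 0 := by
      rw [← toAdd_pow, h1]
      rfl
    have h3 := congrFun h2 i
    have h4 : ((2:ℕ) ^ n : ℕ) • (Multiplicative.toAdd (e ⟨w.1, w.2.2⟩) i) = 0 := h3
    calc ((2:ℕ) ^ n : ℕ) •
        ((Multiplicative.toAdd (e ⟨w.1, w.2.2⟩) i : ↥(Prufer 2)) : AddCircle (1:ℚ))
        = ((((2:ℕ) ^ n : ℕ) • (Multiplicative.toAdd (e ⟨w.1, w.2.2⟩) i) : ↥(Prufer 2)) :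
            AddCircle (1:ℚ)) := by simp
      _ = 0 := by rw [h4]; rfl
  refine Finite.of_injective
    (fun w : ↥(Omega 2 n D ⊓ T) =>
      (fun i => ⟨_, hmem w i⟩ : Fin r → {x : AddCircle (1:ℚ) | ((2:ℕ) ^ n : ℕ) • x = 0})) ?_
  intro w1 w2 h
  have h2 : (⟨w1.1, w1.2.2⟩ : ↥T) = ⟨w2.1, w2.2.2⟩ := by
    apply e.injective
    apply Multiplicative.toAdd.injective
    funext i
    have h5 := congrFun h i
    have h6 := congrArg Subtype.val h5
    exact Subtype.ext h6
  have h7 := congrArg Subtype.val h2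
  exact Subtype.ext h7

/-- `Ω_n(D)` is finite for a discrete 2-toral group. -/
lemma finite_omega {D : Type*} [CommGroup D] (T : Subgroup D) {r : ℕ}
    (e : ↥T ≃* Multiplicative (Fin r → ↥(Prufer 2))) (hQ : Finite (D ⧸ T)) (n : ℕ) :
    Finite ↥(Omega 2 n D) := by
  classical
  set φ : ↥(Omega 2 n D) →* D ⧸ T :=
    (QuotientGroup.mk' T).comp (Omega 2 n D).subtype with hφ
  haveI hker : Finite ↥φ.ker := by
    haveI := finite_omega_inf_torus T e n
    refine Finite.of_injective (fun w : ↥φ.ker =>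
      (⟨(w.1 : D), Subgroup.mem_inf.mpr ⟨w.1.2, ?_⟩⟩ : ↥(Omega 2 n D ⊓ T))) ?_
    · exact (QuotientGroup.eq_one_iff _).mp w.2
    · intro w1 w2 h
      have h5 := congrArg Subtype.val h
      exact Subtype.ext (Subtype.ext h5)
  haveI : Finite ↥φ.range := Subgroup.instFiniteSubtypeMem _
  haveI : Finite (↥(Omega 2 n D) ⧸ φ.ker) :=
    Finite.of_equiv _ (QuotientGroup.quotientKerEquivRange φ).symm.toEquiv
  exact Finite.of_equiv _ (Subgroup.groupEquivQuotientProdSubgroup (s := φ.ker)).symm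

lemma card_eq_relIndex_mul {D : Type*} [CommGroup D] (X P : Subgroup D) :
    Nat.card ↥P = X.relIndex P * Nat.card ↥(X ⊓ P) := by
  have h1 := Subgroup.card_eq_card_quotient_mul_card_subgroup (X.subgroupOf P)
  have h2 : Nat.card ↥(X.subgroupOf P) = Nat.card ↥(X ⊓ P) := by
    rw [← Subgroup.inf_subgroupOf_right X P]
    exact Nat.card_congr (Subgroup.subgroupOfEquivOfLe inf_le_right).toEquiv
  rw [Subgroup.relIndex, Subgroup.index_eq_card, ← h2, ← h1]

lemma omega_sup {D : Type*} [CommGroup D] {D₀ : Subgroup D} {k : ℕ}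
    (hdiv : ∀ x ∈ D₀, ∀ m : ℕ, m ≠ 0 → ∃ y ∈ D₀, y ^ m = x)
    (hexp : ∀ x : D, x ^ (2:ℕ) ^ k ∈ D₀)
    (H : Subgroup D) (hH : D₀ ≤ H) {n : ℕ} (hn : k ≤ n) :
    (Omega 2 n D ⊓ H) ⊔ D₀ = H := by
  apply le_antisymm
  · exact sup_le inf_le_right hH
  · intro x hx
    obtain ⟨y, hy, hyx⟩ := hdiv (x ^ (2:ℕ) ^ k) (hexp x) ((2:ℕ) ^ k)
      (pow_ne_zero _ two_ne_zero)
    have hmem : x * y⁻¹ ∈ Omega 2 n D ⊓ H := by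
      refine Subgroup.mem_inf.mpr ⟨?_, mul_mem hx (inv_mem (hH hy))⟩
      show (x * y⁻¹) ^ (2:ℕ) ^ n = 1
      have hnk : (2:ℕ) ^ n = 2 ^ k * 2 ^ (n - k) := by
        rw [← pow_add]
        congr 1
        omega
      have h1 : (x * y⁻¹) ^ (2:ℕ) ^ k = 1 := by
        rw [mul_pow, inv_pow, hyx, mul_inv_cancel]
      rw [hnk, pow_mul, h1, one_pow]
    have hx' : x = (x * y⁻¹) * y := by group
    rw [hx']
    exact mul_mem (Subgroup.mem_sup_left hmem) (Subgroup.mem_sup_right hy)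

lemma omega_count {D : Type*} [CommGroup D] {D₀ : Subgroup D} {k : ℕ}
    (hdiv : ∀ x ∈ D₀, ∀ m : ℕ, m ≠ 0 → ∃ y ∈ D₀, y ^ m = x)
    (hexp : ∀ x : D, x ^ (2:ℕ) ^ k ∈ D₀)
    (H : Subgroup D) (hH : D₀ ≤ H) {n : ℕ} (hn : k ≤ n) :
    Nat.card ↥(Omega 2 n D ⊓ H) =
      D₀.relIndex H * Nat.card ↥(Omega 2 n D ⊓ D₀) := by
  have h1 := card_eq_relIndex_mul D₀ (Omega 2 n D ⊓ H)
  have h2 : D₀ ⊓ (Omega 2 n D ⊓ H) = Omega 2 n D ⊓ D₀ := by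
    rw [inf_left_comm, inf_eq_left.mpr hH]
  have h3 : D₀.relIndex (Omega 2 n D ⊓ H) = D₀.relIndex H := by
    conv_rhs => rw [← omega_sup hdiv hexp H hH hn]
    rw [Subgroup.relIndex_sup_right]
  rw [h1, h2, h3]

lemma omega_bound {D : Type*} [CommGroup D] {D₀ : Subgroup D}
    (hdiv : ∀ x ∈ D₀, ∀ m : ℕ, m ≠ 0 → ∃ y ∈ D₀, y ^ m = x)
    {x : D} (hx0 : x ∈ D₀) {K : Subgroup D} (hK : K ≤ D₀) (hxK : x ∉ K)
    {t : ℕ} (ht : x ^ (2:ℕ) ^ t = 1) (htmin : ¬ x ^ (2:ℕ) ^ (t - 1) = 1)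
    {n : ℕ} (hn : t ≤ n) (hfin : Finite ↥(Omega 2 n D)) :
    2 ^ (n + 1) * Nat.card ↥(Omega 2 n D ⊓ K) ≤
      2 ^ t * Nat.card ↥(Omega 2 n D ⊓ D₀) := by
  classical
  have ht1 : 1 ≤ t := by
    rcases Nat.eq_zero_or_pos t with h0 | h
    · exact absurd (by rw [show t - 1 = t from by omega]; exact ht) htmin
    · exact h
  obtain ⟨c, hc0, hcx⟩ := hdiv x hx0 ((2:ℕ) ^ (n - t)) (pow_ne_zero _ two_ne_zero)
  have hcpow : c ^ (2:ℕ) ^ n = 1 := by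
    rw [show (2:ℕ) ^ n = 2 ^ (n - t) * 2 ^ t by rw [← pow_add]; congr 1; omega,
      pow_mul, hcx, ht]
  have hcord : orderOf c = 2 ^ n := by
    haveI : Fact (Nat.Prime 2) := ⟨Nat.prime_two⟩
    have hnot : ¬ c ^ (2:ℕ) ^ (n - 1) = 1 := by
      intro h
      apply htmin
      have h2 : x ^ (2:ℕ) ^ (t - 1) = c ^ (2:ℕ) ^ (n - 1) := by
        rw [← hcx, ← pow_mul, ← pow_add]
        congr 2
        omega
      rw [h2, h]
    have h3 := orderOf_eq_prime_pow (x := c) (p := 2) (n := n - 1) hnot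
      (by rw [show n - 1 + 1 = n by omega]; exact hcpow)
    rw [show n - 1 + 1 = n by omega] at h3
    exact h3
  set a := n + 1 - t with hadef
  have hdord : orderOf (c ^ (2:ℕ) ^ a) = 2 ^ (t - 1) := by
    rw [orderOf_pow' c (pow_ne_zero _ two_ne_zero), hcord,
      Nat.gcd_eq_right (pow_dvd_pow 2 (by omega : a ≤ n)),
      Nat.pow_div (by omega : a ≤ n) (by norm_num)]
    congr 1
    omega
  set W := Omega 2 n D ⊓ K with hWdef
  have hWsub : W ⊓ Subgroup.zpowers c ≤ Subgroup.zpowers (c ^ (2:ℕ) ^ a) := by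
    intro g hg
    obtain ⟨hgW, hgz⟩ := Subgroup.mem_inf.mp hg
    obtain ⟨hgΩ, hgK⟩ := Subgroup.mem_inf.mp hgW
    obtain ⟨j, hj⟩ := Subgroup.mem_zpowers_iff.mp hgz
    set m := (j % ((2:ℕ) ^ n : ℤ)).toNat with hmdef
    have hj2 : c ^ m = g := by
      have h1 : c ^ (j % ((orderOf c : ℕ) : ℤ)) = c ^ j := zpow_mod_orderOf c j
      rw [hcord] at h1
      have h2 : (m : ℤ) = j % ((2:ℕ) ^ n : ℤ) :=
        Int.toNat_of_nonneg (Int.emod_nonneg j (by positivity))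
      calc c ^ m = c ^ ((m : ℤ)) := (zpow_natCast c m).symm
        _ = c ^ (j % ((2:ℕ) ^ n : ℤ)) := by rw [h2]
        _ = c ^ j := by rw [← h1]; norm_cast
        _ = g := hj
    by_cases hm0 : m = 0
    · rw [hm0, pow_zero] at hj2
      rw [← hj2]
      exact one_mem _
    set a' := m.factorization 2 with ha'def
    set u := m / 2 ^ a' with hudef
    have hfac : 2 ^ a' * u = m := Nat.ordProj_mul_ordCompl_eq_self m 2
    have hu2 : ¬ (2 ∣ u) := Nat.not_dvd_ordCompl Nat.prime_two hm0
    by_cases hcase : a ≤ a'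
    · have hgd : g = (c ^ (2:ℕ) ^ a) ^ (2 ^ (a' - a) * u) := by
        rw [← hj2, ← pow_mul, ← hfac, ← mul_assoc, ← pow_add,
          show a + (a' - a) = a' from by omega]
      rw [hgd]
      exact pow_mem (Subgroup.mem_zpowers _) _
    · exfalso
      have hco : Nat.Coprime u (2 ^ (n - a')) :=
        Nat.Coprime.pow_right _ (((Nat.Prime.coprime_iff_not_dvd Nat.prime_two).2 hu2).symm)
      obtain ⟨v, -, hv⟩ := Nat.exists_mul_mod_eq_one_of_coprime hco
        (Nat.one_lt_two_pow (by omega))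
      have huv : u * v = 2 ^ (n - a') * (u * v / 2 ^ (n - a')) + 1 := by
        conv_lhs => rw [← Nat.div_add_mod (u * v) (2 ^ (n - a'))]
        rw [hv]
      have hkey : g ^ v = c ^ ((2:ℕ) ^ a') := by
        rw [← hj2, ← pow_mul]
        calc c ^ (m * v) = c ^ (2 ^ a' * (u * v)) := by rw [← hfac, mul_assoc]
          _ = c ^ (2 ^ a' * (2 ^ (n - a') * (u * v / 2 ^ (n - a')) + 1)) := by rw [← huv]
          _ = c ^ (2 ^ a' + 2 ^ n * (u * v / 2 ^ (n - a'))) := by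
              congr 1
              rw [mul_add, mul_one, ← mul_assoc, ← pow_add,
                show a' + (n - a') = n from by omega]
              omega
          _ = c ^ ((2:ℕ) ^ a') * (c ^ (2:ℕ) ^ n) ^ (u * v / 2 ^ (n - a')) := by
              rw [pow_add, pow_mul]
          _ = c ^ ((2:ℕ) ^ a') := by rw [hcpow, one_pow, mul_one]
      have hx' : (g ^ v) ^ ((2:ℕ) ^ (n - t - a')) = x := by
        rw [hkey, ← pow_mul, ← pow_add, show a' + (n - t - a') = n - t from by omega, hcx]
      exact hxK (hx' ▸ pow_mem (pow_mem hgK v) _)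
  haveI hfinΩD₀ : Finite ↥(Omega 2 n D ⊓ D₀) := subgroup_finite_of_le inf_le_left hfin
  haveI hfinW : Finite ↥W := subgroup_finite_of_le inf_le_left hfin
  have hZle : Subgroup.zpowers c ≤ Omega 2 n D ⊓ D₀ := by
    rw [Subgroup.zpowers_le]
    exact Subgroup.mem_inf.mpr ⟨hcpow, hc0⟩
  have hsuple : W ⊔ Subgroup.zpowers c ≤ Omega 2 n D ⊓ D₀ :=
    sup_le (inf_le_inf_left _ hK) hZle
  haveI : Finite ↥(W ⊔ Subgroup.zpowers c) := subgroup_finite_of_le hsuple hfinΩD₀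
  haveI : Finite ↥(Subgroup.zpowers (c ^ (2:ℕ) ^ a)) := by
    apply Nat.finite_of_card_ne_zero
    rw [Nat.card_zpowers, hdord]
    positivity
  have hcardZ : Nat.card ↥(Subgroup.zpowers c) = 2 ^ n := by rw [Nat.card_zpowers, hcord]
  have hprod := card_eq_relIndex_mul W (Subgroup.zpowers c)
  have hinfle : Nat.card ↥(W ⊓ Subgroup.zpowers c) ≤ 2 ^ (t - 1) := by
    rw [← hdord, ← Nat.card_zpowers]
    exact Subgroup.card_le_of_le hWsub
  have hsupcard : W.relIndex (Subgroup.zpowers c) * Nat.card ↥W ≤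
      Nat.card ↥(Omega 2 n D ⊓ D₀) := by
    have h1 := card_eq_relIndex_mul W (W ⊔ Subgroup.zpowers c)
    have h2 : W ⊓ (W ⊔ Subgroup.zpowers c) = W := inf_eq_left.mpr le_sup_left
    have h3 : W.relIndex (W ⊔ Subgroup.zpowers c) = W.relIndex (Subgroup.zpowers c) := by
      rw [sup_comm, Subgroup.relIndex_sup_right]
    rw [h2, h3] at h1
    rw [← h1]
    exact Subgroup.card_le_of_le hsuple
  have h2t : 2 * 2 ^ (t - 1) = 2 ^ t := by
    rw [← pow_succ']
    congr 1
    omega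
  calc 2 ^ (n + 1) * Nat.card ↥W
      = (2 ^ n * Nat.card ↥W) * 2 := by ring
    _ = (W.relIndex (Subgroup.zpowers c) * Nat.card ↥(W ⊓ Subgroup.zpowers c) *
          Nat.card ↥W) * 2 := by rw [← hcardZ, hprod]
    _ = (W.relIndex (Subgroup.zpowers c) * Nat.card ↥W) *
          (2 * Nat.card ↥(W ⊓ Subgroup.zpowers c)) := by ring
    _ ≤ Nat.card ↥(Omega 2 n D ⊓ D₀) * (2 * 2 ^ (t - 1)) :=
        Nat.mul_le_mul hsupcard (Nat.mul_le_mul_left _ hinfle)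
    _ = 2 ^ t * Nat.card ↥(Omega 2 n D ⊓ D₀) := by rw [h2t]; ring

lemma fixedSub_antitone {G : Type*} [Group G] {D : Type*} [Group D]
    [MulDistribMulAction G D] {A B : Subgroup G} (h : B ≤ A) :
    fixedSub G D (A : Set G) ≤ fixedSub G D (B : Set G) :=
  fun _x hx a ha => hx a (h ha)

end AuxOff
/-- For a finite group `G` acting faithfully on an abelian discrete
`2`-toral group `D`, for all sufficiently large `n` the over-offenders of `G` on `D`
coincide with the over-offenders of `G` on `Ω_n(D)` (whose identity component is
trivial). -/
theorem overOffenders_eq_overOffenders_omega {G D : Type*} [Group G] [Finite G]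
    [CommGroup D] [MulDistribMulAction G D] [FaithfulSMul G D]
    (hD : IsDiscretePToral 2 D) (D₀ : Subgroup D) (hD₀ : IsMaxDivisible D₀) :
    ∃ N : ℕ, ∀ n ≥ N, ∀ A : Subgroup G,
      IsOverOffenderOn 2 D₀ (⊤ : Subgroup D) A ↔
        IsOverOffenderOn 2 (⊥ : Subgroup D) (Omega 2 n D) A := by
  classical
  obtain ⟨T, -, ⟨r, ⟨e⟩⟩, k, hk⟩ := hD
  have hdiv : ∀ x ∈ D₀, ∀ m : ℕ, m ≠ 0 → ∃ y ∈ D₀, y ^ m = x := hD₀.1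
  have hTD₀ : T ≤ D₀ := hD₀.2 T (torus_div T e)
  haveI hfinQ : Finite (D ⧸ T) := Nat.finite_of_card_ne_zero (by rw [hk]; positivity)
  have hexpT : ∀ x : D, x ^ (2:ℕ) ^ k ∈ T := by
    intro x
    apply (QuotientGroup.eq_one_iff _).mp
    rw [show ((x ^ (2:ℕ) ^ k : D) : D ⧸ T) = ((x : D ⧸ T)) ^ (2:ℕ) ^ k from
      map_pow (QuotientGroup.mk' T) x _, ← hk]
    exact pow_card_eq_one'
  have hexp : ∀ x : D, x ^ (2:ℕ) ^ k ∈ D₀ := fun x => hTD₀ (hexpT x)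
  have hidx : D₀.index ≠ 0 := by
    intro h0
    have h1 : D₀.index ∣ T.index := Subgroup.index_dvd_of_le hTD₀
    have h2 : T.index = 2 ^ k := by rw [Subgroup.index_eq_card, hk]
    rw [h0] at h1
    have h3 := Nat.eq_zero_of_zero_dvd h1
    rw [h2] at h3
    exact (pow_ne_zero k two_ne_zero) h3
  have tors : ∀ x : D, ∃ m : ℕ, x ^ (2:ℕ) ^ m = 1 := by
    intro x
    obtain ⟨m, hm⟩ := torus_torsion T e (x ^ (2:ℕ) ^ k) (hexpT x)
    exact ⟨k + m, by rw [pow_add, pow_mul]; exact hm⟩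
  have Hbound : ∀ A : Subgroup G, ¬ (D₀ ≤ fixedSub G D (A : Set G)) →
      ∃ t : ℕ, ∀ n : ℕ, t ≤ n →
        2 ^ (n + 1) * Nat.card ↥(Omega 2 n D ⊓ (fixedSub G D (A : Set G) ⊓ D₀)) ≤
          2 ^ t * Nat.card ↥(Omega 2 n D ⊓ D₀) := by
    intro A hA
    rw [SetLike.le_def] at hA
    push_neg at hA
    obtain ⟨x, hx0, hxF⟩ := hA
    have hxK : x ∉ fixedSub G D (A : Set G) ⊓ D₀ :=
      fun h => hxF (Subgroup.mem_inf.mp h).1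
    have hx1 : x ≠ 1 := fun h => hxF (by rw [h]; exact (fixedSub G D (A : Set G)).one_mem)
    have hfind1 : 1 ≤ Nat.find (tors x) := by
      rcases Nat.eq_zero_or_pos (Nat.find (tors x)) with h0 | hpos
      · exfalso
        apply hx1
        have h1 := Nat.find_spec (tors x)
        rw [h0, pow_zero, pow_one] at h1
        exact h1
      · exact hpos
    refine ⟨Nat.find (tors x), fun n hn => ?_⟩
    exact omega_bound hdiv hx0 inf_le_right hxK (Nat.find_spec (tors x))
      (Nat.find_min (tors x) (by omega)) hn (finite_omega T e hfinQ n)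
  choose! tb htb using Hbound
  haveI : Fintype (Subgroup G) := Fintype.ofFinite _
  refine ⟨k + Nat.card G + Finset.univ.sup tb, fun n hn A => ?_⟩
  have hnk : k ≤ n := by omega
  haveI hfinΩ : Finite ↥(Omega 2 n D) := finite_omega T e hfinQ n
  haveI hfinΩD₀ : Finite ↥(Omega 2 n D ⊓ D₀) := subgroup_finite_of_le inf_le_left hfinΩ
  have hEpos : 0 < Nat.card ↥(Omega 2 n D ⊓ D₀) := Nat.card_pos
  have hcount : ∀ H : Subgroup D, D₀ ≤ H →
      Nat.card ↥(Omega 2 n D ⊓ H) = D₀.relIndex H * Nat.card ↥(Omega 2 n D ⊓ D₀) :=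
    fun H hH => omega_count hdiv hexp H hH hnk
  have hΩtot : Nat.card ↥(Omega 2 n D) =
      D₀.index * Nat.card ↥(Omega 2 n D ⊓ D₀) := by
    have h1 := hcount ⊤ le_top
    rwa [inf_top_eq, Subgroup.relIndex_top_right] at h1
  constructor
  · rintro ⟨⟨hp, hcomm, hle, hbest⟩, hover⟩
    have hleA : D₀ ≤ fixedSub G D (A : Set G) := le_trans hle inf_le_right
    refine ⟨⟨hp, hcomm, bot_le, fun B hBA => ?_⟩, ?_⟩
    · rw [Subgroup.relIndex_bot_left, Subgroup.relIndex_bot_left,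
        hcount _ (le_trans hleA (fixedSub_antitone hBA)), hcount _ hleA,
        ← mul_assoc, ← mul_assoc]
      refine Nat.mul_le_mul_right _ ?_
      have h1 := hbest B hBA
      rwa [top_inf_eq, top_inf_eq] at h1
    · rw [Subgroup.relIndex_bot_left, Subgroup.relIndex_bot_left, hΩtot,
        hcount _ hleA, ← mul_assoc]
      have h1 : D₀.index < Nat.card ↥A * D₀.relIndex (fixedSub G D (A : Set G)) := by
        have h2 := hover
        rwa [Subgroup.relIndex_top_right, top_inf_eq] at h2
      exact mul_lt_mul_of_pos_right h1 hEpos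
  · rintro ⟨⟨hp, hcomm, -, hbest⟩, hover⟩
    rw [Subgroup.relIndex_bot_left, Subgroup.relIndex_bot_left] at hover
    have hleA : D₀ ≤ fixedSub G D (A : Set G) := by
      by_contra hA
      have h1sup : tb A ≤ Finset.univ.sup tb := Finset.le_sup (Finset.mem_univ A)
      have htn : tb A ≤ n := by omega
      have hb := htb A hA n htn
      have h8 : Nat.card ↥(Omega 2 n D ⊓ fixedSub G D (A : Set G)) ≤
          D₀.index * Nat.card ↥(Omega 2 n D ⊓ (fixedSub G D (A : Set G) ⊓ D₀)) := by
        have h1 := card_eq_relIndex_mul D₀ (Omega 2 n D ⊓ fixedSub G D (A : Set G))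
        have h2 : D₀ ⊓ (Omega 2 n D ⊓ fixedSub G D (A : Set G)) =
            Omega 2 n D ⊓ (fixedSub G D (A : Set G) ⊓ D₀) := by
          rw [inf_left_comm, inf_comm D₀ (fixedSub G D (A : Set G))]
        have h3 : D₀.relIndex (Omega 2 n D ⊓ fixedSub G D (A : Set G)) ≤ D₀.index :=
          Nat.le_of_dvd (Nat.pos_of_ne_zero hidx)
            (Subgroup.relIndex_dvd_index_of_normal D₀ _)
        rw [h1, h2]
        exact Nat.mul_le_mul_right _ h3
      have hAG : Nat.card ↥A ≤ Nat.card G := Subgroup.card_le_card_group A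
      have hchain : 2 ^ (n + 1) * (D₀.index * Nat.card ↥(Omega 2 n D ⊓ D₀)) <
          (Nat.card G * 2 ^ (tb A)) * (D₀.index * Nat.card ↥(Omega 2 n D ⊓ D₀)) := by
        calc 2 ^ (n + 1) * (D₀.index * Nat.card ↥(Omega 2 n D ⊓ D₀))
            = 2 ^ (n + 1) * Nat.card ↥(Omega 2 n D) := by rw [hΩtot]
          _ < 2 ^ (n + 1) *
              (Nat.card ↥A * Nat.card ↥(Omega 2 n D ⊓ fixedSub G D (A : Set G))) :=
              mul_lt_mul_of_pos_left hover (by positivity)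
          _ ≤ 2 ^ (n + 1) * (Nat.card ↥A * (D₀.index *
              Nat.card ↥(Omega 2 n D ⊓ (fixedSub G D (A : Set G) ⊓ D₀)))) :=
              Nat.mul_le_mul_left _ (Nat.mul_le_mul_left _ h8)
          _ = (Nat.card ↥A * D₀.index) * (2 ^ (n + 1) *
              Nat.card ↥(Omega 2 n D ⊓ (fixedSub G D (A : Set G) ⊓ D₀))) := by ring
          _ ≤ (Nat.card ↥A * D₀.index) *
              (2 ^ (tb A) * Nat.card ↥(Omega 2 n D ⊓ D₀)) := Nat.mul_le_mul_left _ hb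
          _ ≤ (Nat.card G * D₀.index) *
              (2 ^ (tb A) * Nat.card ↥(Omega 2 n D ⊓ D₀)) :=
              Nat.mul_le_mul_right _ (Nat.mul_le_mul_right _ hAG)
          _ = (Nat.card G * 2 ^ (tb A)) *
              (D₀.index * Nat.card ↥(Omega 2 n D ⊓ D₀)) := by ring
      have hlt : 2 ^ (n + 1) < Nat.card G * 2 ^ (tb A) :=
        lt_of_mul_lt_mul_right hchain (Nat.zero_le _)
      have hge : 2 ^ (tb A + Nat.card G + 1) ≤ 2 ^ (n + 1) :=
        Nat.pow_le_pow_right (by norm_num) (by omega)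
      have hgt : Nat.card G * 2 ^ (tb A) < 2 ^ (tb A + Nat.card G + 1) := by
        rw [show tb A + Nat.card G + 1 = (Nat.card G + 1) + tb A from by omega, pow_add]
        have h1 : Nat.card G < 2 ^ (Nat.card G + 1) :=
          lt_of_lt_of_le (Nat.lt_two_pow_self (n := Nat.card G)) (Nat.pow_le_pow_right (by norm_num) (by omega))
        exact mul_lt_mul_of_pos_right h1 (by positivity)
      exact absurd (lt_trans hlt (lt_of_lt_of_le hgt hge)) (lt_irrefl _)
    refine ⟨⟨hp, hcomm, le_inf le_top hleA, fun B hBA => ?_⟩, ?_⟩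
    · have hleB : D₀ ≤ fixedSub G D (B : Set G) := le_trans hleA (fixedSub_antitone hBA)
      have h1 := hbest B hBA
      rw [Subgroup.relIndex_bot_left, Subgroup.relIndex_bot_left, hcount _ hleB,
        hcount _ hleA, ← mul_assoc, ← mul_assoc] at h1
      rw [top_inf_eq, top_inf_eq]
      exact Nat.le_of_mul_le_mul_right h1 hEpos
    · rw [Subgroup.relIndex_top_right, top_inf_eq]
      rw [hΩtot, hcount _ hleA, ← mul_assoc] at hover
      exact lt_of_mul_lt_mul_right hover (Nat.zero_le _)
end

section
/- Let F be a saturated fusion system over a discrete p-toral group S and let P ≤ S be fully automized and receptive in F. Then for every Q that is F-conjugate to P, there exists a morphism φ ∈ Hom_F(N_S(Q), N_S(P)) with φ(Q) = P. -/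
open scoped Pointwise

namespace FusionSystem

variable {S : Type*} [Group S]

/-- The group `Aut_F(P)` of `F`-automorphisms of `P`, as a subgroup of `MulAut P`. -/
def autF (F : FusionSystem S) (P : Subgroup S) : Subgroup (MulAut ↥P) where
  carrier := {α | F.IsMor P (P.subtype.comp α.toMonoidHom)}
  one_mem' := by
    have h := F.conj_isMor P 1
    have e : (MulAut.conj (1 : S)).toMonoidHom.comp P.subtype
        = P.subtype.comp (MulEquiv.toMonoidHom (1 : MulAut ↥P)) := by
      ext x; simp
    rwa [e] at h
  mul_mem' := by
    intro α β hα hβ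
    have h := F.comp_isMor P P (P.subtype.comp β.toMonoidHom)
      (P.subtype.comp α.toMonoidHom) (fun x => (β x).2) hβ hα
    have e : (P.subtype.comp α.toMonoidHom).comp
        ((P.subtype.comp β.toMonoidHom).codRestrict P (fun x => (β x).2))
        = P.subtype.comp (α * β).toMonoidHom := by
      ext x; rfl
    rwa [e] at h
  inv_mem' := by
    intro α hα
    have hr : (P.subtype.comp α.toMonoidHom).range = P := by
      ext y
      constructor
      · rintro ⟨x, rfl⟩
        exact (α x).2
      · intro hy
        exact ⟨α⁻¹ ⟨y, hy⟩, by simp [MulAut.inv_def]⟩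
    obtain ⟨ψ, hψmor, hψ⟩ := F.inv_isMor P P (P.subtype.comp α.toMonoidHom) hα hr
    have e : P.subtype.comp (α⁻¹).toMonoidHom = ψ := by
      ext x
      have hx : (P.subtype.comp α.toMonoidHom) (α⁻¹ x) ∈ P := (α (α⁻¹ x)).2
      have h1 := hψ (α⁻¹ x) hx
      have h2 : (⟨(P.subtype.comp α.toMonoidHom) (α⁻¹ x), hx⟩ : ↥P) = x := by
        ext
        simp [MulAut.inv_def]
      rw [h2] at h1
      simpa using h1.symm
    rw [← e] at hψmor
    exact hψmor

end FusionSystem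

/-- The subgroup `Aut_S(P) ≤ MulAut P` of automorphisms induced by conjugation by
elements of `N_S(P)`. -/
def autS (S : Type*) [Group S] (P : Subgroup S) : Subgroup (MulAut ↥P) where
  carrier := {α | ∃ g ∈ (Subgroup.normalizer (P : Set S)), ∀ x : ↥P, (α x : S) = g * x * g⁻¹}
  one_mem' := ⟨1, one_mem _, fun x => by simp⟩
  mul_mem' := by
    rintro α β ⟨g, hg, hgα⟩ ⟨h, hh, hhβ⟩
    refine ⟨g * h, mul_mem hg hh, fun x => ?_⟩
    have h1 := hgα (β x)
    have h2 := hhβ x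
    simp only [MulAut.mul_apply]
    rw [h1, h2]
    group
  inv_mem' := by
    rintro α ⟨g, hg, hgα⟩
    refine ⟨g⁻¹, inv_mem hg, fun x => ?_⟩
    have h1 := hgα (α⁻¹ x)
    have h2 : (x : S) = g * (α⁻¹ x : S) * g⁻¹ := by
      rw [← h1]
      simp [MulAut.inv_def]
    rw [h2]
    group

/-- The torus rank of a group: the supremum of the ranks of its discrete `p`-torus
subgroups. -/
noncomputable def torusRank (p : ℕ) (G : Type*) [Group G] : ℕ :=
  sSup {r : ℕ | ∃ T : Subgroup G, Nonempty (↥T ≃* Multiplicative (Fin r → Prufer p))}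

/-- Comparison of orders of virtually discrete `p`-toral groups:
`ord(G) = (rk(G₀), |G/G₀|) ≤ ord(H)` lexicographically. -/
def ordLE (p : ℕ) (G : Type*) [Group G] (H : Type*) [Group H] : Prop :=
  torusRank p G < torusRank p H ∨
    (torusRank p G = torusRank p H ∧
      Nat.card (G ⧸ identityComponent p G) ≤ Nat.card (H ⧸ identityComponent p H))

namespace FusionSystem

variable {S : Type*} [Group S]

/-- `P` is fully normalized in `F`: `|N_S(Q)| ≤ |N_S(P)|` for every `F`-conjugate
`Q` of `P`. -/
def FullyNormalized (p : ℕ) (F : FusionSystem S) (P : Subgroup S) : Prop :=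
  ∀ Q : Subgroup S, F.IsConjTo Q P → ordLE p ↥(Subgroup.normalizer (Q : Set S)) ↥(Subgroup.normalizer (P : Set S))

/-- `P` is fully centralized in `F`: `|C_S(Q)| ≤ |C_S(P)|` for every `F`-conjugate
`Q` of `P`. -/
def FullyCentralized (p : ℕ) (F : FusionSystem S) (P : Subgroup S) : Prop :=
  ∀ Q : Subgroup S, F.IsConjTo Q P →
    ordLE p ↥(Subgroup.centralizer (Q : Set S)) ↥(Subgroup.centralizer (P : Set S))

/-- `P` is fully automized in `F`: `Out_F(P)` is finite and `Out_S(P)` is a Sylow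
`p`-subgroup of `Out_F(P)` (phrased via indices over the inner automorphisms). -/
def FullyAutomized (p : ℕ) (F : FusionSystem S) (P : Subgroup S) : Prop :=
  autS S P ≤ F.autF P ∧
    ((MulAut.conj : ↥P →* MulAut ↥P).range.relIndex (F.autF P) ≠ 0) ∧
    (∀ α ∈ autS S P, ∃ k : ℕ,
      α ^ p ^ k ∈ (MulAut.conj : ↥P →* MulAut ↥P).range) ∧
    ¬ p ∣ (autS S P).relIndex (F.autF P)

end FusionSystem

/-- The subgroup `N_φ ≤ N_S(Q)` of elements whose conjugation action is transported
by `φ` into `Aut_S(P)`. -/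
def Nphi {S : Type*} [Group S] (Q P : Subgroup S) (φ : ↥Q →* S) : Subgroup S where
  carrier := {g : S | ∃ hg : g ∈ (Subgroup.normalizer (Q : Set S)), ∃ h ∈ (Subgroup.normalizer (P : Set S)),
    ∀ (x : S) (hx : x ∈ Q),
      φ ⟨g * x * g⁻¹, (Subgroup.mem_normalizer_iff.mp hg x).mp hx⟩
        = h * φ ⟨x, hx⟩ * h⁻¹}
  one_mem' := by
    refine ⟨one_mem _, 1, one_mem _, ?_⟩
    intro x hx
    have e : (⟨1 * x * 1⁻¹, (Subgroup.mem_normalizer_iff.mp (one_mem _) x).mp hx⟩ : ↥Q)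
        = ⟨x, hx⟩ := by
      ext; group
    rw [e]
    group
  mul_mem' := by
    rintro g₁ g₂ ⟨hg₁, h₁, hh₁, H₁⟩ ⟨hg₂, h₂, hh₂, H₂⟩
    refine ⟨mul_mem hg₁ hg₂, h₁ * h₂, mul_mem hh₁ hh₂, ?_⟩
    intro x hx
    have hx2 : g₂ * x * g₂⁻¹ ∈ Q := (Subgroup.mem_normalizer_iff.mp hg₂ x).mp hx
    have e : (⟨g₁ * g₂ * x * (g₁ * g₂)⁻¹,
        (Subgroup.mem_normalizer_iff.mp (mul_mem hg₁ hg₂) x).mp hx⟩ : ↥Q)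
        = ⟨g₁ * (g₂ * x * g₂⁻¹) * g₁⁻¹,
          (Subgroup.mem_normalizer_iff.mp hg₁ _).mp hx2⟩ := by
      ext; group
    rw [e, H₁ _ hx2, H₂ x hx]
    group
  inv_mem' := by
    rintro g ⟨hg, h, hh, H⟩
    refine ⟨inv_mem hg, h⁻¹, inv_mem hh, ?_⟩
    intro x hx
    have hx2 : g⁻¹ * x * g⁻¹⁻¹ ∈ Q :=
      (Subgroup.mem_normalizer_iff.mp (inv_mem hg) x).mp hx
    have h1 := H (g⁻¹ * x * g⁻¹⁻¹) hx2
    have e : (⟨g * (g⁻¹ * x * g⁻¹⁻¹) * g⁻¹,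
        (Subgroup.mem_normalizer_iff.mp hg _).mp hx2⟩ : ↥Q) = ⟨x, hx⟩ := by
      ext; group
    rw [e] at h1
    show φ ⟨g⁻¹ * x * g⁻¹⁻¹, hx2⟩ = h⁻¹ * φ ⟨x, hx⟩ * h⁻¹⁻¹
    rw [h1]
    group

namespace FusionSystem

variable {S : Type*} [Group S]

/-- `P` is receptive in `F`: every `F`-isomorphism onto `P` extends to `N_φ`. -/
def Receptive (F : FusionSystem S) (P : Subgroup S) : Prop :=
  ∀ (Q : Subgroup S) (φ : ↥Q →* S), F.IsMor Q φ → φ.range = P →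
    ∃ ψ : ↥(Nphi Q P φ) →* S, F.IsMor (Nphi Q P φ) ψ ∧
      (∀ y : ↥(Nphi Q P φ), ψ y ∈ (Subgroup.normalizer (P : Set S))) ∧
      ∀ (x : S) (hx : x ∈ Q) (hx' : x ∈ Nphi Q P φ), ψ ⟨x, hx'⟩ = φ ⟨x, hx⟩

/-- The saturation axioms for a fusion system over a discrete `p`-toral group. -/
def IsSaturated (p : ℕ) (F : FusionSystem S) : Prop :=
  (∀ P : Subgroup S, F.FullyNormalized p P →
      F.FullyCentralized p P ∧ F.FullyAutomized p P) ∧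
    (∀ P : Subgroup S, F.FullyCentralized p P → F.Receptive P) ∧
    (∀ P : ℕ → Subgroup S, (∀ i, P i ≤ P (i + 1)) →
      ∀ φ : ↥(⨆ i, P i) →* S,
        (∀ i, F.IsMor (P i) (φ.comp (Subgroup.inclusion (le_iSup P i)))) →
          F.IsMor (⨆ i, P i) φ)

end FusionSystem

section Aux

/-- Elements of a discrete `p`-torus have `p`-power order. -/
private lemma pTorus_pow {p : ℕ} {T : Type*} [Group T] (hT : IsPTorus p T) (t : T) :
    ∃ N : ℕ, t ^ p ^ N = 1 := by
  obtain ⟨r, ⟨ι⟩⟩ := hT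
  have h : ∀ i : Fin r, ∃ n : ℕ, (p ^ n : ℕ) • (((ι t).toAdd i : AddCircle (1 : ℚ))) = 0 :=
    fun i => ((ι t).toAdd i).2
  choose n hn using h
  refine ⟨Finset.univ.sup n, ?_⟩
  apply ι.injective
  rw [map_pow, map_one]
  have : (p ^ Finset.univ.sup n : ℕ) • (ι t).toAdd = 0 := by
    funext i
    apply Subtype.ext
    have hle : n i ≤ Finset.univ.sup n := Finset.le_sup (Finset.mem_univ i)
    have : (p : ℕ) ^ Finset.univ.sup n = p ^ (Finset.univ.sup n - n i) * p ^ n i := by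
      rw [← pow_add, Nat.sub_add_cancel hle]
    show (p ^ Finset.univ.sup n : ℕ) • (((ι t).toAdd i : AddCircle (1 : ℚ))) = 0
    rw [this, mul_smul, hn i, smul_zero]
  have hpow : ((ι t) ^ p ^ Finset.univ.sup n).toAdd = (p ^ Finset.univ.sup n : ℕ) • (ι t).toAdd := by
    rfl
  apply Multiplicative.toAdd.injective
  rw [hpow, this]
  rfl

/-- Elements of a discrete `p`-toral group have `p`-power order. -/
private lemma exists_pow_pow_eq_one {p : ℕ} (hp : p.Prime) {S : Type*} [Group S]
    (hS : IsDiscretePToral p S) (g : S) : ∃ m : ℕ, g ^ p ^ m = 1 := by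
  obtain ⟨T, hTn, hTt, k, hcard⟩ := hS
  have hfin : Finite (S ⧸ T) := by
    have h0 : Nat.card (S ⧸ T) ≠ 0 := by rw [hcard]; exact pow_ne_zero _ hp.ne_zero
    exact (Nat.card_ne_zero.mp h0).2
  have h1 : (QuotientGroup.mk' T) g ^ p ^ k = 1 := by
    rw [← hcard]; exact pow_card_eq_one'
  have h2 : g ^ p ^ k ∈ T := by
    rw [← QuotientGroup.ker_mk' T, MonoidHom.mem_ker, map_pow]
    exact h1
  obtain ⟨N, hN⟩ := pTorus_pow hTt (⟨g ^ p ^ k, h2⟩ : ↥T)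
  refine ⟨k + N, ?_⟩
  have := congrArg (fun x : ↥T => (x : S)) hN
  simpa [pow_add, pow_mul] using this

/-- The conjugation automorphism of `Q` induced by an element of its normalizer. -/
private def conjAutOf {S : Type*} [Group S] {Q : Subgroup S} (g : S)
    (hg : g ∈ Subgroup.normalizer (Q : Set S)) : MulAut ↥Q where
  toFun x := ⟨g * x * g⁻¹, (Subgroup.mem_normalizer_iff.mp hg x).mp x.2⟩
  invFun x := ⟨g⁻¹ * x * g, by
    have := (Subgroup.mem_normalizer_iff.mp (inv_mem hg) (x : S)).mp x.2
    simpa using this⟩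
  left_inv x := Subtype.ext (by show g⁻¹ * (g * ↑x * g⁻¹) * g = ↑x; group)
  right_inv x := Subtype.ext (by show g * (g⁻¹ * ↑x * g) * g⁻¹ = ↑x; group)
  map_mul' x y := Subtype.ext (by
    show g * (↑x * ↑y) * g⁻¹ = (g * ↑x * g⁻¹) * (g * ↑y * g⁻¹); group)

private lemma autS_pow {S : Type*} [Group S] {Q : Subgroup S} {α : MulAut ↥Q} {g : S}
    (h : ∀ x : ↥Q, (α x : S) = g * x * g⁻¹) (n : ℕ) (x : ↥Q) :
    ((α ^ n) x : S) = g ^ n * x * (g ^ n)⁻¹ := by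
  induction n with
  | zero => simp
  | succ n ih =>
    have h1 : (α ^ (n + 1)) x = α ((α ^ n) x) := by rw [pow_succ']; rfl
    rw [h1, h ((α ^ n) x), ih]
    group

private lemma mulAut_conj_conj {G : Type*} [Group G] (σ : MulAut G) (x : G) :
    σ * MulAut.conj x * σ⁻¹ = MulAut.conj (σ x) := by
  ext y
  simp [MulAut.conj_apply, MulAut.mul_apply, mul_assoc]

/-- Sylow-theoretic conjugation lemma in a finite group. -/
private lemma sylow_conj {p : ℕ} (hp : p.Prime) {G : Type*} [Group G] [Finite G]
    {Sh Hh : Subgroup G} (hS : IsPGroup p ↥Sh) (hH : IsPGroup p ↥Hh)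
    (hind : ¬ p ∣ Sh.index) : ∃ g : G, ∀ h ∈ Hh, g * h * g⁻¹ ∈ Sh := by
  haveI : Fact p.Prime := ⟨hp⟩
  haveI : Finite (Sylow p G) :=
    Finite.of_injective (fun P : Sylow p G => (P : Subgroup G)) (fun P Q h => Sylow.ext h)
  obtain ⟨Q1, hQ1⟩ := hS.exists_le_sylow
  have hSQ1 : (Q1 : Subgroup G) = Sh := by
    obtain ⟨m, hm⟩ := IsPGroup.iff_card.mp Q1.2
    have hd1 : Sh.relIndex Q1 ∣ p ^ m := by
      rw [← hm]
      exact Subgroup.index_dvd_card (H := Sh.subgroupOf (Q1 : Subgroup G))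
    have hd2 : Sh.relIndex Q1 ∣ Sh.index := ⟨(Q1 : Subgroup G).index,
      (Subgroup.relIndex_mul_index hQ1).symm⟩
    have hnp : ¬ p ∣ Sh.relIndex Q1 := fun hc => hind (hc.trans hd2)
    obtain ⟨j, hj, hrel⟩ := (Nat.dvd_prime_pow hp).mp hd1
    have hj0 : j = 0 := by
      by_contra hj0
      exact hnp (hrel ▸ dvd_pow_self p hj0)
    have hone : Sh.relIndex Q1 = 1 := by rw [hrel, hj0, pow_zero]
    exact le_antisymm (Subgroup.relIndex_eq_one.mp hone) hQ1
  obtain ⟨Q2, hQ2⟩ := hH.exists_le_sylow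
  obtain ⟨g, hgQ⟩ := MulAction.exists_smul_eq G Q2 Q1
  refine ⟨g, fun h hh => ?_⟩
  have hmem : h ∈ (Q2 : Subgroup G) := hQ2 hh
  have h2 : g * h * g⁻¹ ∈ ((g • Q2 : Sylow p G) : Subgroup G) := by
    rw [Sylow.coe_subgroup_smul]
    exact (Subgroup.mem_smul_pointwise_iff_exists _ _ _).mpr ⟨h, hmem, rfl⟩
  rw [hgQ, hSQ1] at h2
  exact h2

end Aux

/-- Let `F` be a saturated fusion system over a discrete `p`-toral
group `S` and let `P ≤ S` be fully automized and receptive.  Then for every `Q`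
which is `F`-conjugate to `P` there is `φ ∈ Hom_F(N_S(Q), N_S(P))` with `φ(Q) = P`. -/
theorem exists_hom_of_normalizers_of_fullyAutomized_receptive (p : ℕ) (hp : p.Prime)
    {S : Type*} [Group S] (hS : IsDiscretePToral p S)
    (F : FusionSystem S) (hsat : F.IsSaturated p)
    (P : Subgroup S) (hfa : F.FullyAutomized p P) (hrec : F.Receptive P)
    (Q : Subgroup S) (hQP : F.IsConjTo Q P) :
    ∃ ψ : ↥(Subgroup.normalizer (Q : Set S)) →* S, F.IsMor (Subgroup.normalizer (Q : Set S)) ψ ∧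
      (∀ y : ↥(Subgroup.normalizer (Q : Set S)), ψ y ∈ (Subgroup.normalizer (P : Set S))) ∧
      (Q.subgroupOf (Subgroup.normalizer (Q : Set S))).map ψ = P := by
  classical
  obtain ⟨φ, hφmor, hφrange⟩ := hQP
  have hφinj : Function.Injective φ := F.inj Q φ hφmor
  have hmem : ∀ x : ↥Q, φ x ∈ P := fun x => hφrange ▸ ⟨x, rfl⟩
  set φr : ↥Q →* ↥P := φ.codRestrict P hmem with hφr
  have hφr_bij : Function.Bijective φr := by
    constructor
    · intro a b h
      exact hφinj (congrArg Subtype.val h)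
    · intro y
      obtain ⟨x, hx⟩ : (y : S) ∈ φ.range := hφrange ▸ y.2
      exact ⟨x, Subtype.ext hx⟩
  set e : ↥Q ≃* ↥P := MulEquiv.ofBijective φr hφr_bij with he_def
  have he : ∀ x : ↥Q, (e x : S) = φ x := fun x => rfl
  set θ : MulAut ↥Q ≃* MulAut ↥P := MulAut.congr e with hθ_def
  have hθapp : ∀ (α : MulAut ↥Q) (y : ↥P), θ α y = e (α (e.symm y)) := fun α y => rfl
  -- the inverse of φ as a morphism of F
  obtain ⟨φi, hφimor, hφi⟩ := F.inv_isMor Q P φ hφmor hφrange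
  have hφiQ : ∀ y : ↥P, φi y ∈ Q := by
    intro y
    obtain ⟨x, hx⟩ : (y : S) ∈ φ.range := hφrange ▸ y.2
    have h1 := hφi x (by rw [hx]; exact y.2)
    have h2 : (⟨φ x, by rw [hx]; exact y.2⟩ : ↥P) = y := Subtype.ext hx
    rw [h2] at h1
    rw [h1]
    exact x.2
  have he_symm : ∀ y : ↥P, φi y = ((e.symm y : ↥Q) : S) := by
    intro y
    conv_lhs => rw [← e.apply_symm_apply y]
    exact hφi (e.symm y) (hmem _)
  -- `θ` carries `Aut_S(Q)` into `Aut_F(P)`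
  have hH_mor : ∀ α ∈ autS S Q, F.IsMor P (P.subtype.comp (θ α).toMonoidHom) := by
    intro α hα
    obtain ⟨g, hg, hgα⟩ := hα
    have hαQ : F.IsMor Q (Q.subtype.comp α.toMonoidHom) := by
      have h := F.conj_isMor Q g
      have heq : (MulAut.conj g).toMonoidHom.comp Q.subtype
          = Q.subtype.comp α.toMonoidHom := by
        ext x
        exact (hgα x).symm
      rwa [heq] at h
    have step1 := F.comp_isMor P Q φi (Q.subtype.comp α.toMonoidHom) hφiQ hφimor hαQ
    set m : ↥P →* S := (Q.subtype.comp α.toMonoidHom).comp (φi.codRestrict Q hφiQ) with hm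
    have hmQ : ∀ y : ↥P, m y ∈ Q := fun y => (α ⟨φi y, hφiQ y⟩).2
    have step2 := F.comp_isMor P Q m φ hmQ step1 hφmor
    have heq : φ.comp (m.codRestrict Q hmQ) = P.subtype.comp (θ α).toMonoidHom := by
      ext y
      show φ ⟨m y, hmQ y⟩ = ((θ α) y : S)
      have h1 : (⟨m y, hmQ y⟩ : ↥Q) = α ⟨φi y, hφiQ y⟩ := Subtype.ext rfl
      have h2 : (⟨φi y, hφiQ y⟩ : ↥Q) = e.symm y := Subtype.ext (he_symm y)
      rw [h1, h2, hθapp]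
      rfl
    rwa [heq] at step2
  set A := F.autF P with hA
  set Jn : Subgroup (MulAut ↥P) := (MulAut.conj : ↥P →* MulAut ↥P).range with hJn
  have hJA : Jn ≤ A := by
    rintro _ ⟨x, rfl⟩
    show F.IsMor P (P.subtype.comp (MulAut.conj x).toMonoidHom)
    have h := F.conj_isMor P (x : S)
    have heq : (MulAut.conj (x : S)).toMonoidHom.comp P.subtype
        = P.subtype.comp (MulAut.conj x).toMonoidHom := by
      ext y
      rfl
    rwa [heq] at h
  have hJS : Jn ≤ autS S P := by
    rintro _ ⟨x, rfl⟩
    exact ⟨(x : S), Subgroup.le_normalizer x.2, fun y => rfl⟩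
  have hSA : autS S P ≤ A := hfa.1
  haveI hInormal : (Jn.subgroupOf A).Normal := by
    constructor
    intro n hn a
    rw [Subgroup.mem_subgroupOf] at hn ⊢
    obtain ⟨x, hx⟩ := hn
    refine ⟨a.1 x, ?_⟩
    have : ((a * n * a⁻¹ : ↥A) : MulAut ↥P) = a.1 * n.1 * a.1⁻¹ := rfl
    rw [this, ← hx]
    exact (mulAut_conj_conj a.1 x).symm
  set π : ↥A →* ↥A ⧸ Jn.subgroupOf A := QuotientGroup.mk' (Jn.subgroupOf A) with hπ
  have hker : π.ker = Jn.subgroupOf A := QuotientGroup.ker_mk' _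
  haveI hfinG : Finite (↥A ⧸ Jn.subgroupOf A) := by
    have h0 : (Jn.subgroupOf A).index ≠ 0 := hfa.2.1
    have h1 : Nat.card (↥A ⧸ Jn.subgroupOf A) ≠ 0 := h0
    exact (Nat.card_ne_zero.mp h1).2
  set Hsub : Subgroup (MulAut ↥P) := (autS S Q).map θ.toMonoidHom with hHsub
  have hHsubA : Hsub ≤ A := by
    rintro _ ⟨α, hα, rfl⟩
    exact hH_mor α hα
  set Shat := ((autS S P).subgroupOf A).map π with hShat
  set Hhat := (Hsub.subgroupOf A).map π with hHhat
  have hpS : IsPGroup p ↥Shat := by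
    intro x
    obtain ⟨a, ha, hax⟩ := Subgroup.mem_map.mp x.2
    obtain ⟨k, hk⟩ := hfa.2.2.1 a.1 (Subgroup.mem_subgroupOf.mp ha)
    refine ⟨k, ?_⟩
    apply Subtype.ext
    rw [SubmonoidClass.coe_pow, ← hax, ← map_pow, OneMemClass.coe_one]
    have : a ^ p ^ k ∈ π.ker := by
      rw [hker, Subgroup.mem_subgroupOf]
      exact hk
    exact this
  have hpH : IsPGroup p ↥Hhat := by
    intro x
    obtain ⟨a, ha, hax⟩ := Subgroup.mem_map.mp x.2
    obtain ⟨α, hα, hθα⟩ := Subgroup.mem_map.mp (Subgroup.mem_subgroupOf.mp ha)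
    obtain ⟨g, hg, hgα⟩ := hα
    obtain ⟨m', hm'⟩ := exists_pow_pow_eq_one hp hS g
    have hα1 : α ^ p ^ m' = 1 := by
      ext z
      rw [autS_pow hgα (p ^ m') z, hm']
      simp
    refine ⟨m', ?_⟩
    apply Subtype.ext
    rw [SubmonoidClass.coe_pow, ← hax, ← map_pow, OneMemClass.coe_one]
    have ha1 : a ^ p ^ m' = 1 := by
      apply Subtype.ext
      rw [SubmonoidClass.coe_pow, ← hθα, ← map_pow, hα1, map_one, OneMemClass.coe_one]
    rw [ha1, map_one]
  have hkerle : π.ker ≤ (autS S P).subgroupOf A := by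
    rw [hker]
    intro x hx
    exact Subgroup.mem_subgroupOf.mpr (hJS (Subgroup.mem_subgroupOf.mp hx))
  have hindex : Shat.index = (autS S P).relIndex A :=
    Subgroup.index_map_eq _ (QuotientGroup.mk'_surjective _) hkerle
  have hnd : ¬ p ∣ Shat.index := by rw [hindex]; exact hfa.2.2.2
  obtain ⟨ghat, hgconj⟩ := sylow_conj hp hpS hpH hnd
  obtain ⟨χA, hχA⟩ := QuotientGroup.mk'_surjective (Jn.subgroupOf A) ghat
  set χ : MulAut ↥P := χA.1 with hχ
  have hχmor : F.IsMor P (P.subtype.comp χ.toMonoidHom) := χA.2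
  -- key conjugation fact
  have hconj : ∀ α ∈ autS S Q, χ * θ α * χ⁻¹ ∈ autS S P := by
    intro α hα
    have h1 : θ α ∈ Hsub := ⟨α, hα, rfl⟩
    set aelem : ↥A := ⟨θ α, hHsubA h1⟩ with haelem
    have h2 : π aelem ∈ Hhat :=
      Subgroup.mem_map_of_mem _ (Subgroup.mem_subgroupOf.mpr h1)
    have h3 := hgconj _ h2
    rw [← hχA] at h3
    have h4 : π (χA * aelem * χA⁻¹) ∈ Shat := by
      rw [map_mul, map_mul, map_inv]; exact h3
    obtain ⟨s, hs, hseq⟩ := Subgroup.mem_map.mp h4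
    have h5 : s⁻¹ * (χA * aelem * χA⁻¹) ∈ Jn.subgroupOf A := by
      rw [← hker, MonoidHom.mem_ker, map_mul, map_inv, hseq]
      exact inv_mul_cancel _
    have hsS : (s : MulAut ↥P) ∈ autS S P := Subgroup.mem_subgroupOf.mp hs
    have hj : ((s⁻¹ * (χA * aelem * χA⁻¹) : ↥A) : MulAut ↥P) ∈ autS S P :=
      hJS (Subgroup.mem_subgroupOf.mp h5)
    have hj' : (s : MulAut ↥P)⁻¹ * (χ * θ α * χ⁻¹) ∈ autS S P := by
      simpa [mul_assoc] using hj
    have hfinal : χ * θ α * χ⁻¹ = (s : MulAut ↥P) * ((s : MulAut ↥P)⁻¹ * (χ * θ α * χ⁻¹)) := by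
      group
    rw [hfinal]
    exact mul_mem hsS hj'
  -- the adjusted morphism φ2 = χ ∘ φ
  set φ2 : ↥Q →* S := (P.subtype.comp χ.toMonoidHom).comp φr with hφ2
  have hφ2mor : F.IsMor Q φ2 := F.comp_isMor Q P φ (P.subtype.comp χ.toMonoidHom) hmem hφmor hχmor
  have hφ2app : ∀ x : ↥Q, φ2 x = ((χ (e x) : ↥P) : S) := fun x => rfl
  have hφ2range : φ2.range = P := by
    ext y
    constructor
    · rintro ⟨x, rfl⟩
      exact (χ (e x)).2
    · intro hy
      refine ⟨e.symm (χ⁻¹ ⟨y, hy⟩), ?_⟩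
      rw [hφ2app, e.apply_symm_apply]
      show ((χ (χ⁻¹ ⟨y, hy⟩) : ↥P) : S) = y
      rw [show χ (χ⁻¹ ⟨y, hy⟩) = ⟨y, hy⟩ from by simp [MulAut.inv_def]]
  have hNphi : Subgroup.normalizer (Q : Set S) ≤ Nphi Q P φ2 := by
    intro g hg
    have hα : conjAutOf g hg ∈ autS S Q := ⟨g, hg, fun x => rfl⟩
    obtain ⟨h, hh, hhp⟩ := hconj (conjAutOf g hg) hα
    refine ⟨hg, h, hh, ?_⟩
    intro x hx
    have key := hhp (χ (e ⟨x, hx⟩))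
    have lhs_eq : (χ * θ (conjAutOf g hg) * χ⁻¹) (χ (e ⟨x, hx⟩))
        = χ (e (conjAutOf g hg ⟨x, hx⟩)) := by
      show χ ((θ (conjAutOf g hg)) (χ⁻¹ (χ (e ⟨x, hx⟩)))) = _
      rw [show χ⁻¹ (χ (e ⟨x, hx⟩)) = e ⟨x, hx⟩ from by simp [MulAut.inv_def], hθapp,
        e.symm_apply_apply]
    rw [lhs_eq] at key
    have hsub : (⟨g * x * g⁻¹, (Subgroup.mem_normalizer_iff.mp hg x).mp hx⟩ : ↥Q)
        = conjAutOf g hg ⟨x, hx⟩ := Subtype.ext rfl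
    rw [hsub]
    exact key
  obtain ⟨ψ0, hψ0mor, hψ0norm, hψ0ext⟩ := hrec Q φ2 hφ2mor hφ2range
  set ψ' : ↥(Subgroup.normalizer (Q : Set S)) →* S := ψ0.comp (Subgroup.inclusion hNphi) with hψ'
  refine ⟨ψ', F.restrict_isMor _ _ hNphi ψ0 hψ0mor, fun y => hψ0norm _, ?_⟩
  ext y
  rw [Subgroup.mem_map]
  constructor
  · rintro ⟨x, hx, rfl⟩
    have hxQ : (x : S) ∈ Q := Subgroup.mem_subgroupOf.mp hx
    have : ψ' x = φ2 ⟨(x : S), hxQ⟩ := by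
      show ψ0 (Subgroup.inclusion hNphi x) = _
      exact hψ0ext (x : S) hxQ (hNphi x.2)
    rw [this]
    exact (χ (e ⟨(x : S), hxQ⟩)).2
  · intro hy
    obtain ⟨z, hz⟩ : y ∈ φ2.range := hφ2range ▸ hy
    refine ⟨⟨(z : S), Subgroup.le_normalizer z.2⟩, Subgroup.mem_subgroupOf.mpr z.2, ?_⟩
    have : ψ' ⟨(z : S), Subgroup.le_normalizer z.2⟩ = φ2 ⟨(z : S), z.2⟩ := by
      show ψ0 _ = _
      exact hψ0ext (z : S) z.2 (hNphi (Subgroup.le_normalizer z.2))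
    rw [this]
    rw [show (⟨(z : S), z.2⟩ : ↥Q) = z from Subtype.ext rfl]
    exact hz
end
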